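/- arXiv:1312.6537 — 5 statements merged into one kernel-verified Lean document; each statement's English description precedes it below -/
import Mathlib

section
/- For all natural numbers n ≥ 1, the finite Van Hamme identity holds: ∑_{k=1}^{n} (-1)^{k-1} [n choose k]_q · q^{k(k+1)/2} / (1 - q^k) = ∑_{k=1}^{n} q^k / (1 - q^k), as an identity of rational functions in q (valid for all q with q^k ≠ 1 for 1 ≤ k ≤ n). -/
/-- The q-Pochhammer symbol `(a;q)_n = ∏_{j=0}^{n-1} (1 - a q^j)`. -/
noncomputable def qPoch (a q : ℂ) (n : ℕ) : ℂ := ∏ j ∈ Finset.range n, (1 - a * q ^ j)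

/-- The Gaussian binomial coefficient `[n choose k]_q`. -/
noncomputable def qBinom (q : ℂ) (n k : ℕ) : ℂ :=
  qPoch q q n / (qPoch q q k * qPoch q q (n - k))

lemma qPoch_zero (a q : ℂ) : qPoch a q 0 = 1 := rfl

lemma qPoch_succ (a q : ℂ) (n : ℕ) : qPoch a q (n+1) = qPoch a q n * (1 - a * q ^ n) :=
  Finset.prod_range_succ _ _

lemma one_sub_ne {q : ℂ} {m : ℕ} (h : q ^ (m+1) ≠ 1) : 1 - q * q ^ m ≠ 0 := by
  intro hc
  apply h
  rw [pow_succ']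
  linear_combination -hc

lemma qPoch_ne_zero {q : ℂ} {n : ℕ} (hq : ∀ k, 1 ≤ k → k ≤ n → q ^ k ≠ 1) :
    qPoch q q n ≠ 0 := by
  unfold qPoch
  apply Finset.prod_ne_zero_iff.2
  intro j hj
  have hj' := Finset.mem_range.1 hj
  exact one_sub_ne (hq (j+1) (by omega) (by omega))

lemma qBinom_zero {q : ℂ} {n : ℕ} (h : qPoch q q n ≠ 0) : qBinom q n 0 = 1 := by
  unfold qBinom
  rw [Nat.sub_zero, qPoch_zero, one_mul, div_self h]

lemma qBinom_self {q : ℂ} {n : ℕ} (h : qPoch q q n ≠ 0) : qBinom q n n = 1 := by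
  unfold qBinom
  rw [Nat.sub_self, qPoch_zero, mul_one, div_self h]

lemma tri (k : ℕ) : k * (k + 1) / 2 = k * (k - 1) / 2 + k := by
  have h1 : k * (k + 1) = k * (k - 1) + k * 2 := by
    cases k with
    | zero => rfl
    | succ j => simp [Nat.succ_sub_one]; ring
  rw [h1, Nat.add_mul_div_right _ _ (by norm_num : (0:ℕ) < 2)]

lemma pascal {q : ℂ} {n k : ℕ} (hk : 1 ≤ k) (hk' : k ≤ n)
    (hq : ∀ i, 1 ≤ i → i ≤ n + 1 → q ^ i ≠ 1) :
    qBinom q (n+1) k = q ^ k * qBinom q n k + qBinom q n (k-1) := by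
  obtain ⟨j, rfl⟩ : ∃ j, k = j + 1 := ⟨k-1, by omega⟩
  obtain ⟨d, rfl⟩ : ∃ d, n = j + 1 + d := ⟨n - (j+1), by omega⟩
  unfold qBinom
  have e1 : j + 1 + d + 1 - (j + 1) = d + 1 := by omega
  have e2 : j + 1 + d - (j + 1) = d := by omega
  have e3 : j + 1 - 1 = j := by omega
  have e4 : j + 1 + d - j = d + 1 := by omega
  rw [e1, e2, e3, e4]
  have hPj : qPoch q q j ≠ 0 := qPoch_ne_zero (fun i h1 h2 => hq i h1 (by omega))
  have hPd : qPoch q q d ≠ 0 := qPoch_ne_zero (fun i h1 h2 => hq i h1 (by omega))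
  have hPn : qPoch q q (j+1+d) ≠ 0 := qPoch_ne_zero (fun i h1 h2 => hq i h1 (by omega))
  have hj1 : (1 - q * q ^ j) ≠ 0 := one_sub_ne (hq (j+1) (by omega) (by omega))
  have hd1 : (1 - q * q ^ d) ≠ 0 := one_sub_ne (hq (d+1) (by omega) (by omega))
  rw [qPoch_succ q q (j+1+d), qPoch_succ q q j, qPoch_succ q q d]
  field_simp
  ring

lemma cross {q : ℂ} {n j : ℕ} (hj : j ≤ n)
    (hq : ∀ i, 1 ≤ i → i ≤ n + 1 → q ^ i ≠ 1) :
    qBinom q n j * (1 - q ^ (n+1)) = qBinom q (n+1) (j+1) * (1 - q ^ (j+1)) := by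
  obtain ⟨d, rfl⟩ : ∃ d, n = j + d := ⟨n - j, by omega⟩
  unfold qBinom
  have e1 : j + d - j = d := by omega
  have e2 : j + d + 1 - (j + 1) = d := by omega
  rw [e1, e2]
  have hPj : qPoch q q j ≠ 0 := qPoch_ne_zero (fun i h1 h2 => hq i h1 (by omega))
  have hPd : qPoch q q d ≠ 0 := qPoch_ne_zero (fun i h1 h2 => hq i h1 (by omega))
  have hj1 : (1 - q * q ^ j) ≠ 0 := one_sub_ne (hq (j+1) (by omega) (by omega))
  rw [qPoch_succ q q (j+d), qPoch_succ q q j]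
  have hp1 : q ^ (j + d + 1) = q * q ^ (j + d) := by rw [pow_succ']
  have hp2 : q ^ (j + 1) = q * q ^ j := by rw [pow_succ']
  rw [hp1, hp2]
  field_simp

lemma qbt (q : ℂ) : ∀ (m : ℕ), (∀ k, 1 ≤ k → k ≤ m → q ^ k ≠ 1) → ∀ x : ℂ,
    ∑ k ∈ Finset.range (m+1), (-1:ℂ)^k * qBinom q m k * q^(k*(k-1)/2) * x^k
      = ∏ j ∈ Finset.range m, (1 - x * q ^ j) := by
  intro m
  induction m with
  | zero =>
    intro _ x
    simp [qBinom, qPoch]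
  | succ m ih =>
    intro hq x
    have hq' : ∀ k, 1 ≤ k → k ≤ m → q ^ k ≠ 1 := fun k h1 h2 => hq k h1 (by omega)
    have hPm : qPoch q q m ≠ 0 := qPoch_ne_zero hq'
    have hPm1 : qPoch q q (m+1) ≠ 0 := qPoch_ne_zero hq
    have hR : ∏ j ∈ Finset.range (m+1), (1 - x * q ^ j)
        = (∏ j ∈ Finset.range m, (1 - (q*x) * q ^ j)) * (1 - x) := by
      rw [Finset.prod_range_succ']
      congr 1
      · exact Finset.prod_congr rfl (fun j _ => by ring_nf)
      · norm_num
    rw [hR, ← ih hq' (q*x)]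
    rw [Finset.sum_range_succ, Finset.sum_range_succ']
    have hterm : ∀ k ∈ Finset.range m,
        (-1:ℂ)^(k+1) * qBinom q (m+1) (k+1) * q^((k+1)*((k+1)-1)/2) * x^(k+1)
          = (-1:ℂ)^(k+1) * qBinom q m (k+1) * q^((k+1)*((k+1)-1)/2) * (q*x)^(k+1)
            + (-x) * ((-1:ℂ)^k * qBinom q m k * q^(k*(k-1)/2) * (q*x)^k) := by
      intro k hk
      have hk' := Finset.mem_range.1 hk
      rw [pascal (by omega) (by omega : k+1 ≤ m) hq]
      rw [Nat.add_sub_cancel, Nat.mul_comm (k+1) k, tri k, pow_add]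
      ring
    rw [Finset.sum_congr rfl hterm, Finset.sum_add_distrib]
    have hH1 : ∑ k ∈ Finset.range m,
          (-1:ℂ)^(k+1) * qBinom q m (k+1) * q^((k+1)*((k+1)-1)/2) * (q*x)^(k+1)
        = (∑ k ∈ Finset.range (m+1), (-1:ℂ)^k * qBinom q m k * q^(k*(k-1)/2) * (q*x)^k)
          - (-1:ℂ)^0 * qBinom q m 0 * q^(0*(0-1)/2) * (q*x)^0 := by
      rw [Finset.sum_range_succ' (fun k => (-1:ℂ)^k * qBinom q m k * q^(k*(k-1)/2) * (q*x)^k) m]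
      ring
    rw [hH1, ← Finset.mul_sum]
    have hH2 : ∑ k ∈ Finset.range m, (-1:ℂ)^k * qBinom q m k * q^(k*(k-1)/2) * (q*x)^k
        = (∑ k ∈ Finset.range (m+1), (-1:ℂ)^k * qBinom q m k * q^(k*(k-1)/2) * (q*x)^k)
          - (-1:ℂ)^m * qBinom q m m * q^(m*(m-1)/2) * (q*x)^m := by
      rw [Finset.sum_range_succ]; ring
    rw [hH2]
    simp only [qBinom_zero hPm1, qBinom_zero hPm, qBinom_self hPm1, qBinom_self hPm]
    have hem : (m+1) * ((m+1)-1) / 2 = m*(m-1)/2 + m := by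
      rw [Nat.add_sub_cancel, Nat.mul_comm]
      exact tri m
    rw [hem, pow_add]
    ring

lemma sum_Icc_one (m : ℕ) (f : ℕ → ℂ) :
    ∑ k ∈ Finset.Icc 1 m, f k = ∑ i ∈ Finset.range m, f (i+1) := by
  rw [Finset.range_eq_Ico, Finset.sum_Ico_eq_sum_range]
  rw [show Finset.Icc 1 m = Finset.Ico 1 (m+1) by rfl]
  rw [Finset.sum_Ico_eq_sum_range]
  simp [add_comm]

lemma vsum (q : ℂ) (m : ℕ) (hq : ∀ k, 1 ≤ k → k ≤ m → q ^ k ≠ 1) :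
    ∑ k ∈ Finset.Icc 1 m, (-1:ℂ)^(k-1) * qBinom q m k * q^(k*(k+1)/2)
      = 1 - qPoch q q m := by
  have hPm : qPoch q q m ≠ 0 := qPoch_ne_zero hq
  have hb := qbt q m hq q
  have hprod : ∏ j ∈ Finset.range m, (1 - q * q ^ j) = qPoch q q m := rfl
  rw [hprod, Finset.sum_range_succ'] at hb
  norm_num [qBinom_zero hPm] at hb
  rw [sum_Icc_one]
  have hterm : ∀ i ∈ Finset.range m,
      (-1:ℂ)^((i+1)-1) * qBinom q m (i+1) * q^((i+1)*((i+1)+1)/2)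
        = -((-1:ℂ)^(i+1) * qBinom q m (i+1) * q^((i+1)*i/2) * q^(i+1)) := by
    intro i _
    have e := tri (i+1)
    rw [Nat.add_sub_cancel] at e
    rw [e, pow_add, Nat.add_sub_cancel]
    ring
  rw [Finset.sum_congr rfl hterm, Finset.sum_neg_distrib]
  linear_combination -hb

lemma vanHamme (q : ℂ) (n : ℕ) (hq : ∀ k, 1 ≤ k → k ≤ n → q ^ k ≠ 1) :
    ∑ k ∈ Finset.Icc 1 n, (-1:ℂ)^(k-1) * qBinom q n k * q^(k*(k+1)/2) / (1 - q^k)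
      = ∑ k ∈ Finset.Icc 1 n, q^k / (1 - q^k) := by
  induction n with
  | zero => simp
  | succ n ih =>
    have hq' : ∀ k, 1 ≤ k → k ≤ n → q ^ k ≠ 1 := fun k h1 h2 => hq k h1 (by omega)
    have hIH := ih hq'
    have hPn : qPoch q q n ≠ 0 := qPoch_ne_zero hq'
    have hPn1 : qPoch q q (n+1) ≠ 0 := qPoch_ne_zero hq
    have hD : ∀ k, 1 ≤ k → k ≤ n+1 → (1 - q^k) ≠ 0 := fun k h1 h2 =>
      sub_ne_zero.2 fun h => hq k h1 h2 h.symm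
    have hDn1 : (1 - q^(n+1)) ≠ 0 := hD (n+1) (by omega) le_rfl
    rw [Finset.sum_Icc_succ_top (by omega : 1 ≤ n+1), Finset.sum_Icc_succ_top (by omega : 1 ≤ n+1)]
    have hterm : ∀ k ∈ Finset.Icc 1 n,
        (-1:ℂ)^(k-1) * qBinom q (n+1) k * q^(k*(k+1)/2) / (1 - q^k)
          = ((-1:ℂ)^(k-1) * qBinom q n k * q^(k*(k+1)/2) / (1 - q^k)
              - (-1:ℂ)^(k-1) * qBinom q n k * q^(k*(k+1)/2))
            + (-1:ℂ)^(k-1) * qBinom q n (k-1) * q^(k*(k+1)/2) / (1 - q^k) := by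
      intro k hk
      have hk1 := (Finset.mem_Icc.1 hk).1
      have hk2 := (Finset.mem_Icc.1 hk).2
      rw [pascal hk1 hk2 hq]
      have hDk : (1 - q^k) ≠ 0 := hD k hk1 (by omega)
      field_simp
      ring
    rw [Finset.sum_congr rfl hterm, Finset.sum_add_distrib, Finset.sum_sub_distrib]
    rw [hIH, vsum q n hq']
    have htop : (-1:ℂ)^((n+1)-1) * qBinom q (n+1) (n+1) * q^((n+1)*((n+1)+1)/2) / (1 - q^(n+1))
        = (-1:ℂ)^((n+1)-1) * qBinom q n ((n+1)-1) * q^((n+1)*((n+1)+1)/2) / (1 - q^(n+1)) := by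
      rw [qBinom_self hPn1, Nat.add_sub_cancel, qBinom_self hPn]
    rw [htop, add_assoc,
      ← Finset.sum_Icc_succ_top (by omega : 1 ≤ n+1)
        (fun k => (-1:ℂ)^(k-1) * qBinom q n (k-1) * q^(k*(k+1)/2) / (1 - q^k))]
    have hBterm : ∀ k ∈ Finset.Icc 1 (n+1),
        (-1:ℂ)^(k-1) * qBinom q n (k-1) * q^(k*(k+1)/2) / (1 - q^k)
          = ((-1:ℂ)^(k-1) * qBinom q (n+1) k * q^(k*(k+1)/2)) / (1 - q^(n+1)) := by
      intro k hk
      have hk1 := (Finset.mem_Icc.1 hk).1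
      have hk2 := (Finset.mem_Icc.1 hk).2
      obtain ⟨j, rfl⟩ : ∃ j, k = j + 1 := ⟨k-1, by omega⟩
      have hcross := cross (q := q) (n := n) (j := j) (by omega) hq
      have hDk : (1 - q^(j+1)) ≠ 0 := hD (j+1) (by omega) (by omega)
      rw [Nat.add_sub_cancel, div_eq_div_iff hDk hDn1]
      linear_combination ((-1:ℂ)^j * q^((j+1)*((j+1)+1)/2)) * hcross
    rw [Finset.sum_congr rfl hBterm, ← Finset.sum_div, vsum q (n+1) hq]
    rw [qPoch_succ]
    have hp1 : q ^ (n + 1) = q * q ^ n := by rw [pow_succ']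
    rw [hp1] at hDn1 ⊢
    field_simp
    ring

/-- Van Hamme's identity. -/
theorem stmt0 (n : ℕ) (hn : 1 ≤ n) (q : ℂ)
    (hq : ∀ k, 1 ≤ k → k ≤ n → q ^ k ≠ 1) :
    ∑ k ∈ Finset.Icc 1 n,
        (-1 : ℂ) ^ (k - 1) * qBinom q n k * q ^ (k * (k + 1) / 2) / (1 - q ^ k)
      = ∑ k ∈ Finset.Icc 1 n, q ^ k / (1 - q ^ k) := by
  exact vanHamme q n hq
end

section
/- For natural numbers m, n ≥ 0, the symmetric bibasic identity holds: ∑_{k=0}^{m} (-1)^k p^{k(k+1)/2} / ((p;p)_k (p;p)_{m-k} (x p^k; q)_{n+1}) = ∑_{k=0}^{n} (-1)^k q^{k(k+1)/2} / ((q;q)_k (q;q)_{n-k} (x q^k; p)_{m+1}), as rational functions in x, p, q. -/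
lemma qPoch_self_ne_zero {q : ℂ} (hq1 : ∀ j, 1 ≤ j → q ^ j ≠ 1) (k : ℕ) : qPoch q q k ≠ 0 := by
  unfold qPoch
  rw [Finset.prod_ne_zero_iff]
  intro j _
  have h := hq1 (j+1) (by omega)
  rw [pow_succ'] at h
  exact sub_ne_zero_of_ne (Ne.symm h)

lemma factor_ne_zero {y q : ℂ} {n : ℕ} (h : qPoch y q n ≠ 0) : ∀ j < n, 1 - y * q ^ j ≠ 0 := by
  intro j hj
  unfold qPoch at h
  rw [Finset.prod_ne_zero_iff] at h
  exact h j (Finset.mem_range.mpr hj)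

lemma tri_succ (k : ℕ) : (k+1)*(k+2)/2 = k*(k+1)/2 + (k+1) := by
  have h2 : (k+1)*(k+2) = k*(k+1) + 2*(k+1) := by ring
  rw [h2, Nat.add_mul_div_left _ _ (by norm_num : 0 < 2)]

lemma frac_id {K : Type*} [Field K] (Pi Pl a b E s : K) (n1 : Pi ≠ 0) (n2 : Pl ≠ 0)
    (n3 : 1 - a ≠ 0) (n4 : 1 - b ≠ 0) (n5 : 1 - a*b ≠ 0) :
    s * (E * a * b) / (Pi * (1-a) * (Pl * (1-b)))
      = s * (E * (a*b)) / (Pi * (Pl * (1-b)) * (1-a*b))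
        - (s * -1) * (E * a * (a*b)) / (Pi * (1-a) * Pl * (1-a*b)) := by
  have h1 : Pi * (1-a) * (Pl * (1-b)) ≠ 0 :=
    mul_ne_zero (mul_ne_zero n1 n3) (mul_ne_zero n2 n4)
  have h2 : Pi * (Pl * (1-b)) * (1-a*b) ≠ 0 :=
    mul_ne_zero (mul_ne_zero n1 (mul_ne_zero n2 n4)) n5
  have h3 : Pi * (1-a) * Pl * (1-a*b) ≠ 0 :=
    mul_ne_zero (mul_ne_zero (mul_ne_zero n1 n3) n2) n5
  rw [div_sub_div _ _ h2 h3, div_eq_div_iff h1 (mul_ne_zero h2 h3)]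
  ring

lemma sumB {q : ℂ} (hq1 : ∀ j, 1 ≤ j → q ^ j ≠ 1) {N : ℕ} (hN : 1 ≤ N) :
    ∑ j ∈ Finset.range (N+1),
      (-1 : ℂ) ^ j * q ^ (j*(j+1)/2 + (N - j)) / (qPoch q q j * qPoch q q (N - j)) = 0 := by
  have h1 : ∀ d, 1 ≤ d → (1:ℂ) - q ^ d ≠ 0 := fun d hd => sub_ne_zero_of_ne (Ne.symm (hq1 d hd))
  have hP := qPoch_self_ne_zero hq1
  set t : ℕ → ℂ := fun j => if 1 ≤ j ∧ j ≤ N then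
      (-1:ℂ)^j * q ^ ((j-1)*j/2 + N) / (qPoch q q (j-1) * qPoch q q (N - j) * (1 - q ^ N))
    else 0 with ht
  have key : ∀ j ∈ Finset.range (N+1),
      (-1:ℂ)^j * q ^ (j*(j+1)/2 + (N - j)) / (qPoch q q j * qPoch q q (N - j)) = t j - t (j+1) := by
    intro j hj
    rw [Finset.mem_range] at hj
    rcases Nat.eq_zero_or_pos j with rfl | hj1
    · -- j = 0
      obtain ⟨l, rfl⟩ : ∃ l, N = l + 1 := ⟨N - 1, by omega⟩
      have e1 : t 0 = 0 := by simp [ht]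
      have e2 : t 1 = (-1:ℂ) * q ^ (l+1) / (1 * qPoch q q l * (1 - q ^ (l+1))) := by
        simp only [ht]
        rw [if_pos ⟨le_refl 1, by omega⟩]
        norm_num [qPoch_zero]
      rw [e1, e2]
      rw [show (l+1) - 0 = l+1 from rfl, qPoch_succ, qPoch_zero]
      have hc : q * q ^ l = q ^ (l+1) := (pow_succ' q l).symm
      rw [hc]
      have n2 := hP l
      have n4 := h1 (l+1) (by omega)
      field_simp
      simp
    · rcases Nat.lt_or_ge j N with hjN | hjN
      · -- 1 ≤ j < N
        obtain ⟨i, rfl⟩ : ∃ i, j = i + 1 := ⟨j - 1, by omega⟩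
        obtain ⟨l, hl⟩ : ∃ l, N = i + l + 2 := ⟨N - i - 2, by omega⟩
        subst hl
        have e2 : t (i+1) = (-1:ℂ)^(i+1) * q ^ (i*(i+1)/2 + (i+l+2)) /
            (qPoch q q i * qPoch q q (l+1) * (1 - q ^ (i+l+2))) := by
          simp only [ht]
          rw [if_pos ⟨by omega, by omega⟩,
            show (i+1) - 1 = i from by omega,
            show (i+l+2) - (i+1) = l + 1 from by omega]
        have e3 : t (i+2) = (-1:ℂ)^(i+2) * q ^ ((i+1)*(i+2)/2 + (i+l+2)) /
            (qPoch q q (i+1) * qPoch q q l * (1 - q ^ (i+l+2))) := by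
          simp only [ht]
          rw [if_pos ⟨by omega, by omega⟩,
            show (i+2) - 1 = i+1 from by omega,
            show (i+l+2) - (i+2) = l from by omega]
        rw [e2, e3]
        rw [show (i+l+2) - (i+1) = l+1 from by omega]
        have hkey : (q:ℂ) ^ (i+l+2) = q ^ (i+1) * q ^ (l+1) := by
          rw [← pow_add]; congr 1; omega
        have s1 : q ^ ((i+1)*(i+1+1)/2 + (l+1)) = q^(i*(i+1)/2) * q^(i+1) * q^(l+1) := by
          rw [show (i+1)*(i+1+1)/2 + (l+1) = i*(i+1)/2 + (i+1) + (l+1) from by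
            rw [show (i+1+1) = i+2 from rfl, tri_succ], pow_add, pow_add]
        have s2 : q ^ (i*(i+1)/2 + (i+l+2)) = q^(i*(i+1)/2) * (q^(i+1) * q^(l+1)) := by
          rw [pow_add, hkey]
        have s3 : q ^ ((i+1)*(i+2)/2 + (i+l+2)) = q^(i*(i+1)/2) * q^(i+1) * (q^(i+1) * q^(l+1)) := by
          rw [show (i+1)*(i+2)/2 + (i+l+2) = i*(i+1)/2 + (i+1) + (i+l+2) from by
            rw [tri_succ], pow_add, pow_add, hkey]
        rw [s1, s2, s3, hkey, qPoch_succ q q i, qPoch_succ q q l]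
        have hq1' : q * q ^ i = q ^ (i+1) := (pow_succ' q i).symm
        have hq2' : q * q ^ l = q ^ (l+1) := (pow_succ' q l).symm
        rw [hq1', hq2']
        have n1 := hP i
        have n2 := hP l
        have n3 := h1 (i+1) (by omega)
        have n4 := h1 (l+1) (by omega)
        have n5 := h1 (i+l+2) (by omega)
        rw [hkey] at n5
        linear_combination frac_id (qPoch q q i) (qPoch q q l) (q^(i+1)) (q^(l+1))
          (q^(i*(i+1)/2)) ((-1:ℂ)^(i+1)) n1 n2 n3 n4 n5
      · -- j = N
        have hjN' : j = N := by omega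
        subst hjN'
        obtain ⟨i, rfl⟩ : ∃ i, j = i + 1 := ⟨j - 1, by omega⟩
        have e2 : t (i+1) = (-1:ℂ)^(i+1) * q ^ (i*(i+1)/2 + (i+1)) /
            (qPoch q q i * qPoch q q 0 * (1 - q ^ (i+1))) := by
          simp only [ht]
          rw [if_pos ⟨by omega, le_refl _⟩,
            show (i+1) - 1 = i from by omega,
            show (i+1) - (i+1) = 0 from by omega]
        have e3 : t (i+2) = 0 := by
          simp only [ht]
          rw [if_neg (by omega)]
        rw [e2, e3]
        rw [show (i+1) - (i+1) = 0 from by omega, qPoch_zero]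
        rw [show (i+1)*(i+1+1)/2 + 0 = i*(i+1)/2 + (i+1) from by
          rw [show (i+1+1) = i+2 from rfl, tri_succ]; omega]
        rw [qPoch_succ q q i]
        have hq1' : q * q ^ i = q ^ (i+1) := (pow_succ' q i).symm
        rw [hq1']
        have n1 := hP i
        have n3 := h1 (i+1) (by omega)
        field_simp
        simp
  rw [Finset.sum_congr rfl key, Finset.sum_range_sub']
  have e0 : t 0 = 0 := by simp [ht]
  have eN : t (N+1) = 0 := by simp only [ht]; rw [if_neg (by omega)]
  rw [e0, eN, sub_zero]

lemma frac_id2 {K : Type*} [Field K] (A B F s c d e g : K) (hA : A ≠ 0) (hB : B ≠ 0)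
    (hc : c ≠ 0) (hd : d ≠ 0) (he : e ≠ 0) (hrel : e = c + g * d) :
    s * F / (A * (B * c) * d)
      = s * F / (A * B * d) / e + s * (F * g) / (A * (B * c)) / e := by
  subst hrel
  rw [div_div, div_div, div_add_div _ _
    (mul_ne_zero (mul_ne_zero (mul_ne_zero hA hB) hd) he)
    (mul_ne_zero (mul_ne_zero hA (mul_ne_zero hB hc)) he),
    div_eq_div_iff (mul_ne_zero (mul_ne_zero hA (mul_ne_zero hB hc)) hd)
      (mul_ne_zero (mul_ne_zero (mul_ne_zero (mul_ne_zero hA hB) hd) he)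
        (mul_ne_zero (mul_ne_zero hA (mul_ne_zero hB hc)) he))]
  ring

lemma partialFrac (q y : ℂ) (hq1 : ∀ j, 1 ≤ j → q ^ j ≠ 1) :
    ∀ n : ℕ, (∀ j ≤ n, 1 - y * q ^ j ≠ 0) →
    ∑ j ∈ Finset.range (n+1),
        (-1 : ℂ) ^ j * q ^ (j*(j+1)/2) / (qPoch q q j * qPoch q q (n-j) * (1 - y * q ^ j))
      = 1 / qPoch y q (n+1) := by
  intro n
  induction n with
  | zero =>
    intro _
    simp [qPoch_succ, qPoch_zero]
  | succ n IH =>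
    intro hy
    have hP := qPoch_self_ne_zero hq1
    have h1 : ∀ d, 1 ≤ d → (1:ℂ) - q ^ d ≠ 0 := fun d hd => sub_ne_zero_of_ne (Ne.symm (hq1 d hd))
    have hIH := IH (fun j hj => hy j (by omega))
    have he : (1:ℂ) - y * q ^ (n+1) ≠ 0 := hy (n+1) le_rfl
    rw [Finset.sum_range_succ]
    have step : ∀ j ∈ Finset.range (n+1),
        (-1 : ℂ) ^ j * q ^ (j*(j+1)/2) / (qPoch q q j * qPoch q q (n+1-j) * (1 - y * q ^ j))
          = (-1 : ℂ) ^ j * q ^ (j*(j+1)/2) / (qPoch q q j * qPoch q q (n-j) * (1 - y * q ^ j))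
              / (1 - y * q ^ (n+1))
            + (-1 : ℂ) ^ j * q ^ (j*(j+1)/2 + (n+1-j)) / (qPoch q q j * qPoch q q (n+1-j))
              / (1 - y * q ^ (n+1)) := by
      intro j hj
      rw [Finset.mem_range] at hj
      obtain ⟨d, hd⟩ : ∃ d, n - j = d := ⟨n - j, rfl⟩
      have hd1 : n + 1 - j = d + 1 := by omega
      rw [hd, hd1]
      rw [qPoch_succ q q d]
      have hq2' : q * q ^ d = q ^ (d+1) := (pow_succ' q d).symm
      rw [hq2', show (q:ℂ) ^ (j*(j+1)/2 + (d+1)) = q ^ (j*(j+1)/2) * q ^ (d+1) from pow_add q _ _]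
      have hrel : (1:ℂ) - y * q ^ (n+1) = (1 - q ^ (d+1)) + q ^ (d+1) * (1 - y * q ^ j) := by
        have hpow : (q:ℂ) ^ (d+1) * q ^ j = q ^ (n+1) := by rw [← pow_add]; congr 1; omega
        linear_combination y * hpow
      linear_combination frac_id2 (qPoch q q j) (qPoch q q d) (q ^ (j*(j+1)/2)) ((-1:ℂ)^j)
        (1 - q ^ (d+1)) (1 - y * q ^ j) (1 - y * q ^ (n+1)) (q ^ (d+1))
        (hP j) (hP d) (h1 (d+1) (by omega)) (hy j (by omega)) he hrel
    rw [Finset.sum_congr rfl step, Finset.sum_add_distrib]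
    have hb := sumB hq1 (show 1 ≤ n + 1 by omega)
    rw [Finset.sum_range_succ] at hb
    rw [← Finset.sum_div, ← Finset.sum_div, hIH]
    rw [show n + 1 - (n+1) = 0 from by omega, qPoch_zero] at hb ⊢
    rw [show (n+1)*(n+1+1)/2 + 0 = (n+1)*(n+1+1)/2 from by omega] at hb
    rw [qPoch_succ y q (n+1)]
    have hS : ∑ j ∈ Finset.range (n+1),
        (-1 : ℂ) ^ j * q ^ (j*(j+1)/2 + (n+1-j)) / (qPoch q q j * qPoch q q (n+1-j))
        = -((-1 : ℂ) ^ (n+1) * q ^ ((n+1)*(n+1+1)/2) / (qPoch q q (n+1) * 1)) := by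
      linear_combination hb
    rw [hS]
    have hQ := qPoch_self_ne_zero hq1 (n+1)
    have hPy : qPoch y q (n+1) ≠ 0 := by
      unfold qPoch
      rw [Finset.prod_ne_zero_iff]
      intro i hi
      exact hy i (by simp at hi; omega)
    field_simp
    ring

/-- The symmetric bibasic identity (the case `r = 0`). -/
theorem stmt2 (m n : ℕ) (x p q : ℂ) (hp : p ≠ 0) (hq : q ≠ 0)
    (hp1 : ∀ j, 1 ≤ j → p ^ j ≠ 1) (hq1 : ∀ j, 1 ≤ j → q ^ j ≠ 1)
    (hx1 : ∀ k ≤ m, qPoch (x * p ^ k) q (n + 1) ≠ 0)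
    (hx2 : ∀ k ≤ n, qPoch (x * q ^ k) p (m + 1) ≠ 0) :
    ∑ k ∈ Finset.range (m + 1),
        (-1 : ℂ) ^ k * p ^ (k * (k + 1) / 2) /
          (qPoch p p k * qPoch p p (m - k) * qPoch (x * p ^ k) q (n + 1))
      = ∑ k ∈ Finset.range (n + 1),
          (-1 : ℂ) ^ k * q ^ (k * (k + 1) / 2) /
            (qPoch q q k * qPoch q q (n - k) * qPoch (x * q ^ k) p (m + 1)) := by
  have L : ∀ k ∈ Finset.range (m + 1),
      (-1 : ℂ) ^ k * p ^ (k * (k + 1) / 2) /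
          (qPoch p p k * qPoch p p (m - k) * qPoch (x * p ^ k) q (n + 1))
        = ∑ j ∈ Finset.range (n + 1),
            ((-1 : ℂ) ^ k * p ^ (k * (k + 1) / 2) / (qPoch p p k * qPoch p p (m - k))) *
              ((-1 : ℂ) ^ j * q ^ (j*(j+1)/2) /
                (qPoch q q j * qPoch q q (n-j) * (1 - (x * p ^ k) * q ^ j))) := by
    intro k hk
    rw [Finset.mem_range] at hk
    have h := partialFrac q (x * p ^ k) hq1 n
      (fun j hj => factor_ne_zero (hx1 k (by omega)) j (by omega))
    rw [← div_div, div_eq_mul_one_div, ← h, Finset.mul_sum]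
  have R : ∀ j ∈ Finset.range (n + 1),
      (-1 : ℂ) ^ j * q ^ (j * (j + 1) / 2) /
          (qPoch q q j * qPoch q q (n - j) * qPoch (x * q ^ j) p (m + 1))
        = ∑ k ∈ Finset.range (m + 1),
            ((-1 : ℂ) ^ j * q ^ (j * (j + 1) / 2) / (qPoch q q j * qPoch q q (n - j))) *
              ((-1 : ℂ) ^ k * p ^ (k*(k+1)/2) /
                (qPoch p p k * qPoch p p (m-k) * (1 - (x * q ^ j) * p ^ k))) := by
    intro j hj
    rw [Finset.mem_range] at hj
    have h := partialFrac p (x * q ^ j) hp1 m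
      (fun k hk => factor_ne_zero (hx2 j (by omega)) k (by omega))
    rw [← div_div, div_eq_mul_one_div, ← h, Finset.mul_sum]
  rw [Finset.sum_congr rfl L, Finset.sum_congr rfl R, Finset.sum_comm]
  refine Finset.sum_congr rfl fun j hj => Finset.sum_congr rfl fun k hk => ?_
  rw [Finset.mem_range] at hj hk
  have n1 := qPoch_self_ne_zero hp1 k
  have n2 := qPoch_self_ne_zero hp1 (m - k)
  have n3 := qPoch_self_ne_zero hq1 j
  have n4 := qPoch_self_ne_zero hq1 (n - j)
  have n5 : 1 - x * p ^ k * q ^ j ≠ 0 := factor_ne_zero (hx1 k (by omega)) j (by omega)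
  have n6 : 1 - x * q ^ j * p ^ k ≠ 0 := factor_ne_zero (hx2 j (by omega)) k (by omega)
  rw [div_mul_div_comm, div_mul_div_comm, div_eq_div_iff
    (by exact mul_ne_zero (mul_ne_zero n1 n2) (mul_ne_zero (mul_ne_zero n3 n4) n5))
    (by exact mul_ne_zero (mul_ne_zero n3 n4) (mul_ne_zero (mul_ne_zero n1 n2) n6))]
  ring
end

section
/- For natural numbers m, n ≥ 0 and 0 ≤ r ≤ m, and q with 0 < |q| < 1 (or as formal identity with q generic): ∑_{k=1}^{m} (-1)^k q^{k(k+1)/2 - rk} / ((q;q)_k (q;q)_{m-k} (q^k; q)_{n+1}') − ∑_{k=1}^{n} (-1)^k q^{k(k+1)/2 + rk} / ((q;q)_k (q;q)_{n-k} (q^k; q)_{m+1}') = (1/((q;q)_m (q;q)_n)) · ( −r + ∑_{k=1}^{n} q^k/(1−q^k) − ∑_{k=1}^{m} q^k/(1−q^k) ), where in each product (q^k; q)_{N}' all factors are taken; here p = q in the bibasic identity, i.e., the special case p = q of the identity obtained by letting x → 1. -/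
namespace Stmt4Aux

/-- triangular number -/
def Tri (k : ℕ) : ℕ := k * (k + 1) / 2

lemma Tri_succ (k : ℕ) : Tri (k + 1) = Tri k + (k + 1) := by
  unfold Tri
  rw [show (k+1) * (k+1+1) = k * (k+1) + (k+1) * 2 by ring,
    Nat.add_mul_div_right _ _ (by norm_num : (0:ℕ) < 2)]

lemma Tri_add (a b : ℕ) : Tri (a + b) = Tri a + Tri b + a * b := by
  induction b with
  | zero => simp [Tri]
  | succ b ih =>
      rw [show a + (b+1) = (a+b) + 1 by ring, Tri_succ, ih, Tri_succ]
      ring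

lemma le_Tri (k : ℕ) : k ≤ Tri k := by
  induction k with
  | zero => simp [Tri]
  | succ k ih => rw [Tri_succ]; omega

variable {q : ℂ}

/-- `∏_{j=s+1}^{t} (1 - q^j)` -/
noncomputable def pI (q : ℂ) (s t : ℕ) : ℂ := ∏ j ∈ Finset.Ioc s t, (1 - q ^ j)

lemma pI_ne_zero (hq1 : ∀ j, 1 ≤ j → q ^ j ≠ 1) (s t : ℕ) : pI q s t ≠ 0 := by
  apply Finset.prod_ne_zero_iff.mpr
  intro j hj
  have h1 : 1 ≤ j := by have := (Finset.mem_Ioc.mp hj).1; omega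
  exact sub_ne_zero_of_ne fun h => hq1 j h1 h.symm

lemma pI_split (s t u : ℕ) (h1 : s ≤ t) (h2 : t ≤ u) :
    pI q s t * pI q t u = pI q s u :=
  Finset.prod_Ioc_consecutive _ h1 h2

lemma pI_refl (s : ℕ) : pI q s s = 1 := by simp [pI]

lemma pI_single (s : ℕ) : pI q s (s + 1) = 1 - q ^ (s + 1) := by
  unfold pI
  rw [show Finset.Ioc s (s+1) = {s+1} by ext x; simp [Finset.mem_Ioc]]
  simp

lemma pI_top (s t : ℕ) (h : s ≤ t) : pI q s (t + 1) = pI q s t * (1 - q ^ (t + 1)) := by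
  rw [← pI_split s t (t+1) h (by omega), pI_single]

lemma pI_bot (s u : ℕ) (h : s < u) : pI q s u = (1 - q ^ (s + 1)) * pI q (s + 1) u := by
  rw [← pI_split s (s+1) u (by omega) h, pI_single]

/-- Gaussian binomial coefficient as a complex number -/
noncomputable def G (q : ℂ) (N i : ℕ) : ℂ :=
  if i ≤ N then pI q 0 N / (pI q 0 i * pI q 0 (N - i)) else 0

lemma G_zero (hq1 : ∀ j, 1 ≤ j → q ^ j ≠ 1) (N : ℕ) : G q N 0 = 1 := by
  simp [G, pI_refl, div_self (pI_ne_zero hq1 0 N)]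

lemma G_ne_zero (hq1 : ∀ j, 1 ≤ j → q ^ j ≠ 1) {N i : ℕ} (h : i ≤ N) : G q N i ≠ 0 := by
  rw [G, if_pos h]
  exact div_ne_zero (pI_ne_zero hq1 _ _)
    (mul_ne_zero (pI_ne_zero hq1 _ _) (pI_ne_zero hq1 _ _))

lemma G_top_zero (N i : ℕ) (h : N < i) : G q N i = 0 := by
  rw [G, if_neg (by omega)]

lemma pascal (hq1 : ∀ j, 1 ≤ j → q ^ j ≠ 1) (N i : ℕ) :
    G q (N + 1) (i + 1) = G q N (i + 1) + q ^ (N - i) * G q N i := by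
  rcases lt_trichotomy i N with h | rfl | h
  · -- i < N
    obtain ⟨s, rfl⟩ : ∃ s, N = i + 1 + s := ⟨N - i - 1, by omega⟩
    unfold G
    rw [if_pos (by omega), if_pos (by omega), if_pos (by omega)]
    rw [show i + 1 + s + 1 - (i + 1) = s + 1 by omega,
        show i + 1 + s - (i + 1) = s by omega,
        show i + 1 + s - i = s + 1 by omega]
    have e1 : pI q 0 (i + 1 + s + 1) = pI q 0 (i + 1 + s) * (1 - q ^ (i + 1 + s + 1)) :=
      pI_top _ _ (by omega)
    have e2 : pI q 0 (s + 1) = pI q 0 s * (1 - q ^ (s + 1)) := pI_top _ _ (by omega)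
    have e3 : pI q 0 (i + 1) = pI q 0 i * (1 - q ^ (i + 1)) := pI_top _ _ (by omega)
    rw [e1, e2, e3]
    have n1 := pI_ne_zero hq1 0 (i + 1 + s)
    have n2 := pI_ne_zero hq1 0 s
    have n3 := pI_ne_zero hq1 0 i
    have n4 : (1 : ℂ) - q ^ (s + 1) ≠ 0 := sub_ne_zero_of_ne fun h => hq1 _ (by omega) h.symm
    have n5 : (1 : ℂ) - q ^ (i + 1) ≠ 0 := sub_ne_zero_of_ne fun h => hq1 _ (by omega) h.symm
    field_simp
    ring
  · -- i = N
    rw [G_top_zero i (i+1) (by omega)]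
    unfold G
    rw [if_pos le_rfl, if_pos le_rfl]
    rw [Nat.sub_self, Nat.sub_self, pI_refl]
    have n1 := pI_ne_zero hq1 0 (i + 1)
    have n2 := pI_ne_zero hq1 0 i
    field_simp
    simp
  · rw [G_top_zero N (i+1) (by omega), G_top_zero N i h, G_top_zero (N+1) (i+1) (by omega)]
    ring

end Stmt4Aux

namespace Stmt4Aux

lemma gauss (hq1 : ∀ j, 1 ≤ j → q ^ j ≠ 1) (N : ℕ) (z : ℂ) :
    ∑ i ∈ Finset.range (N + 1), (-1 : ℂ) ^ i * q ^ (Tri i) * G q N i * z ^ i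
      = ∏ t ∈ Finset.range N, (1 - z * q ^ (t + 1)) := by
  induction N with
  | zero => simp [Tri, G_zero hq1]
  | succ N ih =>
      set g : ℕ → ℂ := fun i => (-1 : ℂ) ^ i * q ^ (Tri i) * G q N i * z ^ i with hg
      set f : ℕ → ℂ := fun i => (-1 : ℂ) ^ i * q ^ (Tri i) * G q (N + 1) i * z ^ i with hf
      have hg0 : g 0 = 1 := by simp [hg, Tri, G_zero hq1]
      have hf0 : f 0 = 1 := by simp [hf, Tri, G_zero hq1]
      have hgtop : g (N + 1) = 0 := by simp [hg, G_top_zero N (N+1) (by omega)]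
      have hsum1 : ∑ i ∈ Finset.range (N + 1), g (i + 1)
          = (∏ t ∈ Finset.range N, (1 - z * q ^ (t + 1))) - 1 := by
        have h1 := Finset.sum_range_succ' g (N + 1)
        have h2 := Finset.sum_range_succ g (N + 1)
        rw [h2, ih, hgtop, hg0] at h1
        linear_combination h1.symm
      have hsplit : ∀ i ∈ Finset.range (N + 1),
          f (i + 1) = g (i + 1) + (-(z * q ^ (N + 1))) * g i := by
        intro i hi
        have hiN : i ≤ N := Nat.lt_succ_iff.mp (Finset.mem_range.mp hi)
        have hexp : q ^ (Tri (i+1)) * q ^ (N - i) = q ^ (Tri i) * q ^ (N + 1) := by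
          rw [← pow_add, ← pow_add]
          congr 1
          rw [Tri_succ]
          omega
        show (-1 : ℂ) ^ (i+1) * q ^ (Tri (i+1)) * G q (N+1) (i+1) * z ^ (i+1) = _
        rw [pascal hq1 N i]
        calc (-1 : ℂ) ^ (i+1) * q ^ (Tri (i+1)) * (G q N (i+1) + q ^ (N - i) * G q N i)
              * z ^ (i+1)
            = (-1 : ℂ) ^ (i+1) * q ^ (Tri (i+1)) * G q N (i+1) * z ^ (i+1)
              + (-1 : ℂ) ^ (i+1) * (q ^ (Tri (i+1)) * q ^ (N - i)) * G q N i * z ^ (i+1) := by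
              ring
          _ = _ := by
              rw [hexp, pow_succ (-1 : ℂ) i, pow_succ z i]
              show _ = (-1:ℂ) ^ (i+1) * q ^ (Tri (i+1)) * G q N (i+1) * z ^ (i+1)
                + (-(z * q ^ (N+1))) * ((-1:ℂ) ^ i * q ^ (Tri i) * G q N i * z ^ i)
              rw [pow_succ (-1 : ℂ) i, pow_succ z i]
              ring
      calc ∑ i ∈ Finset.range (N + 1 + 1), f i
          = (∑ i ∈ Finset.range (N + 1), f (i + 1)) + f 0 := Finset.sum_range_succ' f (N + 1)
        _ = (∑ i ∈ Finset.range (N + 1), (g (i + 1) + (-(z * q ^ (N + 1))) * g i)) + f 0 := by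
            rw [Finset.sum_congr rfl hsplit]
        _ = (∑ i ∈ Finset.range (N + 1), g (i + 1))
            + (-(z * q ^ (N + 1))) * (∑ i ∈ Finset.range (N + 1), g i) + f 0 := by
            rw [Finset.sum_add_distrib, ← Finset.mul_sum]
        _ = ∏ t ∈ Finset.range (N + 1), (1 - z * q ^ (t + 1)) := by
            rw [hsum1, ih, hf0, Finset.prod_range_succ]
            ring

end Stmt4Aux

namespace Stmt4Aux

/-- ratio `∏_{j=a-k+1}^{a}(1-q^j) / ∏_{j=b+1}^{b+k}(1-q^j)` -/
noncomputable def A (q : ℂ) (a b k : ℕ) : ℂ := pI q (a - k) a / pI q b (b + k)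

lemma G_shift_up (hq1 : ∀ j, 1 ≤ j → q ^ j ≠ 1) {a b k : ℕ} (hk : k ≤ a) :
    G q (a + b) (b + k) = G q (a + b) b * A q a b k := by
  obtain ⟨s, rfl⟩ : ∃ s, a = s + k := ⟨a - k, by omega⟩
  unfold G A
  rw [if_pos (by omega), if_pos (by omega),
      show s + k + b - (b + k) = s by omega, show s + k + b - b = s + k by omega,
      show s + k - k = s by omega]
  have e1 : pI q 0 (s + k) = pI q 0 s * pI q s (s + k) :=
    (pI_split 0 s (s + k) (by omega) (by omega)).symm
  have e2 : pI q 0 (b + k) = pI q 0 b * pI q b (b + k) :=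
    (pI_split 0 b (b + k) (by omega) (by omega)).symm
  rw [e1, e2]
  have n1 := pI_ne_zero (q := q) hq1
  field_simp
  rw [div_eq_div_iff (by simp [n1])
    (by simp [n1])]
  ring

lemma G_shift_down (hq1 : ∀ j, 1 ≤ j → q ^ j ≠ 1) {a b k : ℕ} (hk : k ≤ b) :
    G q (a + b) (b - k) = G q (a + b) b * A q b a k := by
  obtain ⟨s, rfl⟩ : ∃ s, b = s + k := ⟨b - k, by omega⟩
  unfold G A
  rw [if_pos (by omega), if_pos (by omega),
      show s + k - k = s by omega, show a + (s + k) - s = a + k by omega,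
      show a + (s + k) - (s + k) = a by omega]
  have e1 : pI q 0 (s + k) = pI q 0 s * pI q s (s + k) :=
    (pI_split 0 s (s + k) (by omega) (by omega)).symm
  have e2 : pI q 0 (a + k) = pI q 0 a * pI q a (a + k) :=
    (pI_split 0 a (a + k) (by omega) (by omega)).symm
  rw [e1, e2]
  have n1 := pI_ne_zero (q := q) hq1
  field_simp
  rw [div_eq_div_iff (by simp [n1])
    (by simp [n1])]
  ring

lemma two_Tri (k : ℕ) : 2 * Tri k = k * (k + 1) := by
  rw [mul_comm]
  exact Nat.div_mul_cancel (even_iff_two_dvd.mp (Nat.even_mul_succ_self k))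

lemma key (hq : q ≠ 0) (hq1 : ∀ j, 1 ≤ j → q ^ j ≠ 1) (a b r : ℕ) (h : r + 1 ≤ a) :
    (∑ k ∈ Finset.Icc 1 a, (-1 : ℂ) ^ k * q ^ ((Tri k : ℤ) - ((r : ℤ) + 1) * k) * A q a b k)
      + ∑ k ∈ Finset.Icc 1 b, (-1 : ℂ) ^ k * q ^ ((Tri k : ℤ) + (r : ℤ) * k) * A q b a k
      = -1 := by
  set N := a + b with hN
  set c : ℤ := -((b : ℤ) + r + 1) with hc
  set z : ℂ := q ^ c with hzdef
  set F : ℕ → ℂ := fun i => (-1 : ℂ) ^ i * q ^ (Tri i) * G q N i * z ^ i with hF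
  have hzp : ∀ j : ℕ, z ^ j = q ^ (c * j) := by
    intro j
    rw [hzdef, ← zpow_natCast (q ^ c) j, ← zpow_mul]
  have hFzero : ∑ i ∈ Finset.range (N + 1), F i = 0 := by
    rw [hF]
    rw [gauss hq1 N z]
    apply Finset.prod_eq_zero (i := b + r) (by simp [hN]; omega)
    have h1 : z * q ^ (b + r + 1) = 1 := by
      rw [hzdef, ← zpow_natCast q (b + r + 1), ← zpow_add₀ hq,
        show c + ((b + r + 1 : ℕ) : ℤ) = 0 by rw [hc]; push_cast; ring, zpow_zero]
    rw [h1, sub_self]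
  have htb : F b ≠ 0 := by
    simp only [hF]
    refine mul_ne_zero (mul_ne_zero (mul_ne_zero ?_ ?_) ?_) ?_
    · exact pow_ne_zero _ (by norm_num)
    · exact pow_ne_zero _ hq
    · exact G_ne_zero hq1 (by omega)
    · rw [hzdef]; exact pow_ne_zero _ (zpow_ne_zero _ hq)
  have hup : ∀ k ∈ Finset.Icc 1 a, F (b + k)
      = F b * ((-1 : ℂ) ^ k * q ^ ((Tri k : ℤ) - ((r : ℤ) + 1) * k) * A q a b k) := by
    intro k hk
    have hk2 : k ≤ a := (Finset.mem_Icc.mp hk).2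
    have hGs : G q N (b + k) = G q N b * A q a b k := by
      rw [hN]; exact G_shift_up hq1 hk2
    have hcomb : q ^ (Tri (b + k)) * z ^ (b + k)
        = (q ^ (Tri b) * z ^ b) * q ^ ((Tri k : ℤ) - ((r : ℤ) + 1) * k) := by
      rw [hzp (b + k), hzp b, ← zpow_natCast q (Tri (b + k)), ← zpow_natCast q (Tri b),
        ← zpow_add₀ hq, ← zpow_add₀ hq, ← zpow_add₀ hq]
      congr 1
      rw [hc]
      push_cast [Tri_add]
      ring
    simp only [hF]
    rw [hGs, pow_add (-1 : ℂ) b k]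
    linear_combination ((-1 : ℂ) ^ b * (-1 : ℂ) ^ k * (G q N b * A q a b k)) * hcomb
  have hdown : ∀ k ∈ Finset.Icc 1 b, F (b - k)
      = F b * ((-1 : ℂ) ^ k * q ^ ((Tri k : ℤ) + (r : ℤ) * k) * A q b a k) := by
    intro k hk
    have hk2 : k ≤ b := (Finset.mem_Icc.mp hk).2
    obtain ⟨s, rfl⟩ : ∃ s, b = s + k := ⟨b - k, by omega⟩
    have hGs : G q N (s + k - k) = G q N (s + k) * A q (s + k) a k := by
      rw [hN]; exact G_shift_down hq1 (by omega)
    rw [show s + k - k = s by omega] at hGs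
    have hsq : (-1 : ℂ) ^ k * (-1 : ℂ) ^ k = 1 := by
      rw [← pow_add, ← two_mul, pow_mul]; norm_num
    have h2T : 2 * ((Tri k : ℕ) : ℤ) = (k : ℤ) * ((k : ℤ) + 1) := by
      exact_mod_cast two_Tri k
    have hcomb : q ^ (Tri s) * z ^ s
        = (q ^ (Tri (s + k)) * z ^ (s + k)) * q ^ ((Tri k : ℤ) + (r : ℤ) * k) := by
      rw [hzp s, hzp (s + k), ← zpow_natCast q (Tri s), ← zpow_natCast q (Tri (s + k)),
        ← zpow_add₀ hq, ← zpow_add₀ hq, ← zpow_add₀ hq]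
      congr 1
      rw [hc]
      push_cast [Tri_add]
      linear_combination -h2T
    simp only [hF]
    rw [show s + k - k = s by omega, hGs, pow_add (-1 : ℂ) s k]
    linear_combination ((-1 : ℂ) ^ s * (G q N (s + k) * A q (s + k) a k)) * hcomb
      - ((-1 : ℂ) ^ s * G q N (s + k) * A q (s + k) a k
          * (q ^ (Tri (s + k)) * z ^ (s + k)) * q ^ ((Tri k : ℤ) + (r : ℤ) * k)) * hsq
  have hre2 : ∑ i ∈ Finset.Ico b (N + 1), F i
      = F b + ∑ k ∈ Finset.Icc 1 a, F (b + k) := by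
    rw [Finset.sum_Ico_eq_sum_range, show N + 1 - b = a + 1 by omega,
      Finset.sum_range_succ' (fun i => F (b + i)) a, Nat.add_zero, add_comm]
    congr 1
    rw [show Finset.Icc 1 a = Finset.Ico 1 (a + 1) from (Finset.Ico_add_one_right_eq_Icc 1 a).symm,
      Finset.sum_Ico_eq_sum_range, show a + 1 - 1 = a by omega]
    exact Finset.sum_congr rfl fun i _ => by rw [show b + (1 + i) = b + (i + 1) by omega]
  have hre3 : ∑ i ∈ Finset.Ico 0 b, F i = ∑ k ∈ Finset.Icc 1 b, F (b - k) := by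
    refine (Finset.sum_nbij' (fun k => b - k) (fun i => b - i) ?_ ?_ ?_ ?_ ?_).symm
    · intro x hx; simp only [Finset.mem_Icc] at hx; simp only [Finset.mem_Ico]; omega
    · intro x hx; simp only [Finset.mem_Ico] at hx; simp only [Finset.mem_Icc]; omega
    · intro x hx; simp only [Finset.mem_Icc] at hx; show b - (b - x) = x; omega
    · intro x hx; simp only [Finset.mem_Ico] at hx; show b - (b - x) = x; omega
    · intro x hx; rfl
  have hmul : F b * (1
      + (∑ k ∈ Finset.Icc 1 a, (-1 : ℂ) ^ k * q ^ ((Tri k : ℤ) - ((r : ℤ) + 1) * k) * A q a b k)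
      + ∑ k ∈ Finset.Icc 1 b, (-1 : ℂ) ^ k * q ^ ((Tri k : ℤ) + (r : ℤ) * k) * A q b a k)
      = 0 := by
    have heq : F b * (1
        + (∑ k ∈ Finset.Icc 1 a, (-1 : ℂ) ^ k * q ^ ((Tri k : ℤ) - ((r : ℤ) + 1) * k) * A q a b k)
        + ∑ k ∈ Finset.Icc 1 b, (-1 : ℂ) ^ k * q ^ ((Tri k : ℤ) + (r : ℤ) * k) * A q b a k)
        = F b + (∑ k ∈ Finset.Icc 1 a, F (b + k)) + ∑ k ∈ Finset.Icc 1 b, F (b - k) := by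
      rw [Finset.sum_congr rfl hup, Finset.sum_congr rfl hdown,
        ← Finset.mul_sum, ← Finset.mul_sum]
      ring
    rw [heq]
    have := hFzero
    rw [Finset.range_eq_Ico,
      ← Finset.sum_Ico_consecutive F (Nat.zero_le b) (by omega : b ≤ N + 1),
      hre2, hre3] at this
    linear_combination this
  have hS := (mul_eq_zero.mp hmul).resolve_left htb
  linear_combination hS

end Stmt4Aux

namespace Stmt4Aux

noncomputable def HH (q : ℂ) (a : ℕ) : ℂ := ∑ k ∈ Finset.Icc 1 a, q ^ k / (1 - q ^ k)

noncomputable def TT (q : ℂ) (a b r : ℕ) : ℂ :=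
  (∑ k ∈ Finset.Icc 1 a,
      (-1 : ℂ) ^ k * q ^ ((Tri k : ℤ) - (r : ℤ) * k) * A q a b k / (1 - q ^ k))
  - ∑ k ∈ Finset.Icc 1 b,
      (-1 : ℂ) ^ k * q ^ ((Tri k : ℤ) + (r : ℤ) * k) * A q b a k / (1 - q ^ k)

variable {q : ℂ}

lemma osq (hq1 : ∀ j, 1 ≤ j → q ^ j ≠ 1) {j : ℕ} (hj : 1 ≤ j) : (1 : ℂ) - q ^ j ≠ 0 :=
  sub_ne_zero_of_ne fun h => hq1 j hj h.symm

lemma Deltar (hq : q ≠ 0) (hq1 : ∀ j, 1 ≤ j → q ^ j ≠ 1) (a b r : ℕ) (h : r + 1 ≤ a) :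
    TT q a b (r + 1) = TT q a b r - 1 := by
  have hkey := key hq hq1 a b r h
  unfold TT
  have e1 : (∑ k ∈ Finset.Icc 1 a,
        (-1 : ℂ) ^ k * q ^ ((Tri k : ℤ) - ((r + 1 : ℕ) : ℤ) * k) * A q a b k / (1 - q ^ k))
      - (∑ k ∈ Finset.Icc 1 a,
        (-1 : ℂ) ^ k * q ^ ((Tri k : ℤ) - (r : ℤ) * k) * A q a b k / (1 - q ^ k))
      = ∑ k ∈ Finset.Icc 1 a,
        (-1 : ℂ) ^ k * q ^ ((Tri k : ℤ) - ((r : ℤ) + 1) * k) * A q a b k := by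
    rw [← Finset.sum_sub_distrib]
    refine Finset.sum_congr rfl fun k hk => ?_
    have hk1 : 1 ≤ k := (Finset.mem_Icc.mp hk).1
    have hd := osq hq1 hk1
    have hqe : q ^ ((Tri k : ℤ) - (r : ℤ) * k) = q ^ ((Tri k : ℤ) - ((r : ℤ) + 1) * k) * q ^ k := by
      rw [← zpow_natCast q k, ← zpow_add₀ hq]
      congr 1
      ring
    have hqe2 : q ^ ((Tri k : ℤ) - ((r + 1 : ℕ) : ℤ) * k)
        = q ^ ((Tri k : ℤ) - ((r : ℤ) + 1) * k) := by
      congr 1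
    rw [hqe, hqe2]
    field_simp
    try ring
  have e2 : (∑ k ∈ Finset.Icc 1 b,
        (-1 : ℂ) ^ k * q ^ ((Tri k : ℤ) + (r : ℤ) * k) * A q b a k / (1 - q ^ k))
      - (∑ k ∈ Finset.Icc 1 b,
        (-1 : ℂ) ^ k * q ^ ((Tri k : ℤ) + ((r + 1 : ℕ) : ℤ) * k) * A q b a k / (1 - q ^ k))
      = ∑ k ∈ Finset.Icc 1 b,
        (-1 : ℂ) ^ k * q ^ ((Tri k : ℤ) + (r : ℤ) * k) * A q b a k := by
    rw [← Finset.sum_sub_distrib]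
    refine Finset.sum_congr rfl fun k hk => ?_
    have hk1 : 1 ≤ k := (Finset.mem_Icc.mp hk).1
    have hd := osq hq1 hk1
    have hqe : q ^ ((Tri k : ℤ) + ((r + 1 : ℕ) : ℤ) * k)
        = q ^ ((Tri k : ℤ) + (r : ℤ) * k) * q ^ k := by
      rw [← zpow_natCast q k, ← zpow_add₀ hq]
      congr 1
      push_cast
      ring
    rw [hqe]
    field_simp
    try ring
  linear_combination e1 + e2 + hkey

end Stmt4Aux

namespace Stmt4Aux

lemma Deltam (hq : q ≠ 0) (hq1 : ∀ j, 1 ≤ j → q ^ j ≠ 1) (a b : ℕ) :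
    TT q (a + 1) b 0 = TT q a b 0 - q ^ (a + 1) / (1 - q ^ (a + 1)) := by
  have key0 := key hq hq1 (a + 1) b 0 (by omega)
  simp only [Nat.cast_zero, zero_add, one_mul, zero_mul, add_zero] at key0
  rw [Finset.sum_Icc_succ_top (show (1:ℕ) ≤ a + 1 by omega)] at key0
  unfold TT
  simp only [Nat.cast_zero, zero_mul, sub_zero, add_zero]
  rw [Finset.sum_Icc_succ_top (show (1:ℕ) ≤ a + 1 by omega)]
  set c : ℂ := q ^ (a + 1) / (1 - q ^ (a + 1)) with hcdef
  have hda : (1 : ℂ) - q ^ (a + 1) ≠ 0 := osq hq1 (by omega)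
  have npI := pI_ne_zero (q := q) hq1
  have e1 : (∑ k ∈ Finset.Icc 1 a,
        (-1 : ℂ) ^ k * q ^ ((Tri k : ℤ)) * A q (a + 1) b k / (1 - q ^ k))
      - (∑ k ∈ Finset.Icc 1 a,
        (-1 : ℂ) ^ k * q ^ ((Tri k : ℤ)) * A q a b k / (1 - q ^ k))
      = c * ∑ k ∈ Finset.Icc 1 a,
          (-1 : ℂ) ^ k * q ^ ((Tri k : ℤ) - (k : ℤ)) * A q (a + 1) b k := by
    rw [← Finset.sum_sub_distrib, Finset.mul_sum]
    refine Finset.sum_congr rfl fun k hk => ?_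
    obtain ⟨hk1, hk2⟩ := Finset.mem_Icc.mp hk
    obtain ⟨s, rfl⟩ : ∃ s, a = s + k := ⟨a - k, by omega⟩
    have hdk := osq hq1 hk1
    have hz1 : q ^ ((Tri k : ℤ)) = q ^ (Tri k) := zpow_natCast q (Tri k)
    have hz2 : q ^ ((Tri k : ℤ) - (k : ℤ)) = q ^ (Tri k - k) := by
      rw [← Nat.cast_sub (le_Tri k), zpow_natCast]
    have hTk : q ^ (Tri k) = q ^ (Tri k - k) * q ^ k := by
      rw [← pow_add]
      congr 1
      have := le_Tri k
      omega
    unfold A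
    rw [show s + k + 1 - k = s + 1 by omega, show s + k - k = s by omega]
    have f1 : pI q (s + 1) (s + k + 1) = pI q (s + 1) (s + k) * (1 - q ^ (s + k + 1)) :=
      pI_top _ _ (by omega)
    have f2 : pI q s (s + k) = (1 - q ^ (s + 1)) * pI q (s + 1) (s + k) :=
      pI_bot _ _ (by omega)
    have n1 := npI (s + 1) (s + k)
    have n2 := npI b (b + k)
    rw [hz1, hz2, hTk, f1, f2, hcdef]
    field_simp
    ring
  have e3 : (-1 : ℂ) ^ (a + 1) * q ^ ((Tri (a + 1) : ℤ)) * A q (a + 1) b (a + 1)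
        / (1 - q ^ (a + 1))
      = c * ((-1 : ℂ) ^ (a + 1) * q ^ ((Tri (a + 1) : ℤ) - ((a + 1 : ℕ) : ℤ))
          * A q (a + 1) b (a + 1)) := by
    have hz1 : q ^ ((Tri (a + 1) : ℤ)) = q ^ (Tri (a + 1)) := zpow_natCast q _
    have hz2 : q ^ ((Tri (a + 1) : ℤ) - ((a + 1 : ℕ) : ℤ)) = q ^ (Tri (a + 1) - (a + 1)) := by
      rw [← Nat.cast_sub (le_Tri (a + 1)), zpow_natCast]
    have hTk : q ^ (Tri (a + 1)) = q ^ (Tri (a + 1) - (a + 1)) * q ^ (a + 1) := by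
      rw [← pow_add]
      congr 1
      have := le_Tri (a + 1)
      omega
    rw [hz1, hz2, hTk, hcdef]
    field_simp
  have e2 : (∑ k ∈ Finset.Icc 1 b,
        (-1 : ℂ) ^ k * q ^ ((Tri k : ℤ)) * A q b a k / (1 - q ^ k))
      - (∑ k ∈ Finset.Icc 1 b,
        (-1 : ℂ) ^ k * q ^ ((Tri k : ℤ)) * A q b (a + 1) k / (1 - q ^ k))
      = c * ∑ k ∈ Finset.Icc 1 b,
          (-1 : ℂ) ^ k * q ^ ((Tri k : ℤ)) * A q b (a + 1) k := by
    rw [← Finset.sum_sub_distrib, Finset.mul_sum]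
    refine Finset.sum_congr rfl fun k hk => ?_
    obtain ⟨hk1, hk2⟩ := Finset.mem_Icc.mp hk
    have hdk := osq hq1 hk1
    have hdak : (1 : ℂ) - q ^ (a + k + 1) ≠ 0 := osq hq1 (by omega)
    have hz1 : q ^ ((Tri k : ℤ)) = q ^ (Tri k) := zpow_natCast q (Tri k)
    unfold A
    have f1 : pI q a (a + k) = (1 - q ^ (a + 1)) * pI q (a + 1) (a + k) :=
      pI_bot _ _ (by omega)
    have f2 : pI q (a + 1) (a + 1 + k) = pI q (a + 1) (a + k) * (1 - q ^ (a + k + 1)) := by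
      rw [show a + 1 + k = (a + k) + 1 by omega]
      exact pI_top _ _ (by omega)
    have n1 := npI (a + 1) (a + k)
    have n2 := npI (b - k) b
    rw [hz1, f1, f2, hcdef]
    field_simp
    ring
  linear_combination e1 + e3 + e2 + c * key0

end Stmt4Aux

namespace Stmt4Aux

lemma TT_swap0 (a b : ℕ) : TT q a b 0 = -TT q b a 0 := by
  unfold TT
  norm_num

lemma HH_succ (a : ℕ) : HH q (a + 1) = HH q a + q ^ (a + 1) / (1 - q ^ (a + 1)) :=
  Finset.sum_Icc_succ_top (by omega) _

lemma TT_a0 (hq : q ≠ 0) (hq1 : ∀ j, 1 ≤ j → q ^ j ≠ 1) (a : ℕ) :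
    TT q a 0 0 = -HH q a := by
  induction a with
  | zero => simp [TT, HH]
  | succ a ih => rw [Deltam hq hq1 a 0, ih, HH_succ]; ring

lemma TT_r0 (hq : q ≠ 0) (hq1 : ∀ j, 1 ≤ j → q ^ j ≠ 1) (a b : ℕ) :
    TT q a b 0 = HH q b - HH q a := by
  induction a with
  | zero =>
      rw [TT_swap0, TT_a0 hq hq1 b]
      simp [HH]
  | succ a ih => rw [Deltam hq hq1 a b, ih, HH_succ]; ring

lemma TT_main (hq : q ≠ 0) (hq1 : ∀ j, 1 ≤ j → q ^ j ≠ 1) (a b r : ℕ) (h : r ≤ a) :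
    TT q a b r = -(r : ℂ) + HH q b - HH q a := by
  induction r with
  | zero => rw [TT_r0 hq hq1]; simp
  | succ r ih =>
      rw [Deltar hq hq1 a b r (by omega), ih (by omega)]
      push_cast
      ring

end Stmt4Aux

namespace Stmt4Aux

lemma qPoch_shift {k : ℕ} (hk : 1 ≤ k) : ∀ n, qPoch (q ^ k) q n = pI q (k - 1) (k - 1 + n)
  | 0 => by simp [qPoch, pI]
  | n + 1 => by
      rw [qPoch, Finset.prod_range_succ, ← qPoch, qPoch_shift hk n,
        show k - 1 + (n + 1) = (k - 1 + n) + 1 by omega, pI_top _ _ (by omega),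
        show k - 1 + n + 1 = k + n by omega, ← pow_add]

lemma qPoch_q (n : ℕ) : qPoch q q n = pI q 0 n := by
  have h := qPoch_shift (q := q) (k := 1) le_rfl n
  rw [pow_one] at h
  simpa using h

end Stmt4Aux

open Stmt4Aux in
/-- The `p = q`, `x → 1` case of the bibasic identity. -/
theorem stmt4 (m n r : ℕ) (hr : r ≤ m) (q : ℂ) (hq : q ≠ 0)
    (hq1 : ∀ j, 1 ≤ j → q ^ j ≠ 1) :
    ∑ k ∈ Finset.Icc 1 m,
        (-1 : ℂ) ^ k * q ^ (((k * (k + 1) / 2 : ℕ) : ℤ) - (r : ℤ) * k) /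
          (qPoch q q k * qPoch q q (m - k) * qPoch (q ^ k) q (n + 1))
      - ∑ k ∈ Finset.Icc 1 n,
          (-1 : ℂ) ^ k * q ^ (((k * (k + 1) / 2 : ℕ) : ℤ) + (r : ℤ) * k) /
            (qPoch q q k * qPoch q q (n - k) * qPoch (q ^ k) q (m + 1))
      = (1 / (qPoch q q m * qPoch q q n)) *
          (-(r : ℂ) + ∑ k ∈ Finset.Icc 1 n, q ^ k / (1 - q ^ k)
            - ∑ k ∈ Finset.Icc 1 m, q ^ k / (1 - q ^ k)) := by
  have npI := pI_ne_zero (q := q) hq1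
  have hX : pI q 0 m * pI q 0 n ≠ 0 := mul_ne_zero (npI 0 m) (npI 0 n)
  have h1 : ∀ k ∈ Finset.Icc 1 m,
      (-1 : ℂ) ^ k * q ^ (((k * (k + 1) / 2 : ℕ) : ℤ) - (r : ℤ) * k) /
          (qPoch q q k * qPoch q q (m - k) * qPoch (q ^ k) q (n + 1))
      = (1 / (pI q 0 m * pI q 0 n)) *
          ((-1 : ℂ) ^ k * q ^ ((Tri k : ℤ) - (r : ℤ) * k) * A q m n k / (1 - q ^ k)) := by
    intro k hk
    obtain ⟨hk1, hk2⟩ := Finset.mem_Icc.mp hk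
    have hdk := osq hq1 hk1
    rw [show (k * (k + 1) / 2 : ℕ) = Tri k from rfl]
    rw [qPoch_q, qPoch_q, qPoch_shift hk1 (n + 1),
      show k - 1 + (n + 1) = k + n by omega]
    have f0 : pI q (k - 1) (k + n) = (1 - q ^ k) * pI q k (k + n) := by
      have h := pI_bot (q := q) (k - 1) (k + n) (by omega)
      rwa [show k - 1 + 1 = k by omega] at h
    obtain ⟨s, rfl⟩ : ∃ s, m = s + k := ⟨m - k, by omega⟩
    unfold A
    rw [show s + k - k = s by omega]
    have g1 : pI q 0 (s + k) = pI q 0 s * pI q s (s + k) :=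
      (pI_split 0 s (s + k) (by omega) (by omega)).symm
    have g23 : pI q 0 k * pI q k (k + n) = pI q 0 n * pI q n (n + k) := by
      rw [pI_split 0 k (k + n) (by omega) (by omega),
        pI_split 0 n (n + k) (by omega) (by omega), add_comm k n]
    rw [f0, g1]
    have n1 := npI 0 k
    have n2 := npI 0 s
    have n3 := npI k (k + n)
    have n4 := npI 0 n
    have n5 := npI n (n + k)
    have n6 := npI s (s + k)
    field_simp
    linear_combination (-1 : ℂ) * g23
  have h2 : ∀ k ∈ Finset.Icc 1 n,
      (-1 : ℂ) ^ k * q ^ (((k * (k + 1) / 2 : ℕ) : ℤ) + (r : ℤ) * k) /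
          (qPoch q q k * qPoch q q (n - k) * qPoch (q ^ k) q (m + 1))
      = (1 / (pI q 0 m * pI q 0 n)) *
          ((-1 : ℂ) ^ k * q ^ ((Tri k : ℤ) + (r : ℤ) * k) * A q n m k / (1 - q ^ k)) := by
    intro k hk
    obtain ⟨hk1, hk2⟩ := Finset.mem_Icc.mp hk
    have hdk := osq hq1 hk1
    rw [show (k * (k + 1) / 2 : ℕ) = Tri k from rfl]
    rw [qPoch_q, qPoch_q, qPoch_shift hk1 (m + 1),
      show k - 1 + (m + 1) = k + m by omega]
    have f0 : pI q (k - 1) (k + m) = (1 - q ^ k) * pI q k (k + m) := by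
      have h := pI_bot (q := q) (k - 1) (k + m) (by omega)
      rwa [show k - 1 + 1 = k by omega] at h
    obtain ⟨s, rfl⟩ : ∃ s, n = s + k := ⟨n - k, by omega⟩
    unfold A
    rw [show s + k - k = s by omega]
    have g1 : pI q 0 (s + k) = pI q 0 s * pI q s (s + k) :=
      (pI_split 0 s (s + k) (by omega) (by omega)).symm
    have g23 : pI q 0 k * pI q k (k + m) = pI q 0 m * pI q m (m + k) := by
      rw [pI_split 0 k (k + m) (by omega) (by omega),
        pI_split 0 m (m + k) (by omega) (by omega), add_comm k m]
    rw [f0, g1]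
    have n1 := npI 0 k
    have n2 := npI 0 s
    have n3 := npI k (k + m)
    have n4 := npI 0 m
    have n5 := npI m (m + k)
    have n6 := npI s (s + k)
    field_simp
    linear_combination (-1 : ℂ) * g23
  rw [Finset.sum_congr rfl h1, Finset.sum_congr rfl h2, ← Finset.mul_sum, ← Finset.mul_sum,
    ← mul_sub]
  rw [show (∑ k ∈ Finset.Icc 1 m,
        (-1 : ℂ) ^ k * q ^ ((Tri k : ℤ) - (r : ℤ) * k) * A q m n k / (1 - q ^ k))
      - (∑ k ∈ Finset.Icc 1 n,
        (-1 : ℂ) ^ k * q ^ ((Tri k : ℤ) + (r : ℤ) * k) * A q n m k / (1 - q ^ k))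
      = TT q m n r from rfl]
  rw [TT_main hq hq1 m n r hr, qPoch_q, qPoch_q]
  rfl
end

section
/- For n ≥ 0 and integer r with |r| ≤ n, there holds ∑_{k=1}^{n} (-1)^{k-1} q^{k(k+1)/2 - rk} (1 - q^{2rk}) / ((q;q)_k (q;q)_{n-k} (q^k; q)_{n+1}) = r / (q;q)_n^2, as an identity of rational functions in q. -/
namespace StmtAux
open Finset

variable {q : ℂ}

lemma P_ne_zero (hq1 : ∀ j, 1 ≤ j → q ^ j ≠ 1) (n : ℕ) : qPoch q q n ≠ 0 := by
  rw [qPoch]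
  refine Finset.prod_ne_zero_iff.mpr fun j _ h => hq1 (j+1) (by omega) ?_
  rw [pow_succ']
  linear_combination -h

lemma one_sub_ne (hq1 : ∀ j, 1 ≤ j → q ^ j ≠ 1) {i : ℕ} (hi : 1 ≤ i) : (1:ℂ) - q ^ i ≠ 0 :=
  sub_ne_zero.mpr (Ne.symm (hq1 i hi))

lemma P_succ (n : ℕ) : qPoch q q (n+1) = qPoch q q n * (1 - q ^ (n+1)) := by
  rw [qPoch, Finset.prod_range_succ, qPoch, pow_succ']

lemma P_zero : qPoch q q 0 = 1 := by simp [qPoch]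

lemma tri_step (j : ℕ) : (j+1)*j/2 = j*(j-1)/2 + j := by
  have h : (j+1)*j = j*(j-1) + 2*j := by
    cases j with
    | zero => rfl
    | succ i => simp [Nat.succ_sub_one]; ring
  rw [h, Nat.add_mul_div_left _ _ (by norm_num : 0 < 2)]

lemma P_add (a m : ℕ) : qPoch q q (a + m) = qPoch q q a * qPoch (q^(a+1)) q m := by
  rw [qPoch, Finset.prod_range_add, qPoch, qPoch]
  congr 1
  refine Finset.prod_congr rfl fun j _ => ?_
  rw [pow_add, pow_succ']
  ring

lemma denom_key (n k : ℕ) (hk : 1 ≤ k) :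
    qPoch q q k * qPoch (q^k) q (n+1) = (1 - q^k) * qPoch q q (n+k) := by
  obtain ⟨a, rfl⟩ : ∃ a, k = a + 1 := ⟨k - 1, by omega⟩
  rw [P_succ, show n + (a+1) = a + (n+1) from by omega, P_add]
  ring

lemma tri_cast (a : ℕ) : ((a*(a+1)/2 : ℕ) : ℤ) * 2 = (a:ℤ)*((a:ℤ)+1) := by
  have h : 2 ∣ a*(a+1) := (Nat.even_mul_succ_self a).two_dvd
  have := Nat.div_mul_cancel h
  exact_mod_cast this

lemma tri_cast' (a : ℕ) : ((a*(a-1)/2 : ℕ) : ℤ) * 2 = (a:ℤ)*(a:ℤ) - a := by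
  cases a with
  | zero => simp
  | succ b =>
    have h1 : (b+1)*((b+1)-1) = b*(b+1) := by simp [Nat.succ_sub_one]; ring
    rw [h1, tri_cast b]
    push_cast; ring

lemma split_pow (hq : q ≠ 0) (c d : ℤ) : q^(c-d) * (1 - q^(2*d)) = q^(c-d) - q^(c+d) := by
  rw [mul_sub, mul_one, ← zpow_add₀ hq, show c - d + 2*d = c + d from by ring]

lemma qbin (hq1 : ∀ j, 1 ≤ j → q^j ≠ 1) : ∀ (M : ℕ) (x : ℂ),
    ∑ j ∈ range (M+1), (-1:ℂ)^j * q^(j*(j-1)/2) * x^j / (qPoch q q j * qPoch q q (M-j))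
      = (∏ i ∈ range M, (1 - x * q^i)) / qPoch q q M := by
  intro M
  induction M with
  | zero => intro x; simp [qPoch]
  | succ M ih =>
    intro x
    have hPM := P_ne_zero hq1
    have hM1 : (1:ℂ) - q^(M+1) ≠ 0 := one_sub_ne hq1 (by omega)
    set s : ℕ → ℂ := fun j => (-1:ℂ)^j * q^(j*(j-1)/2) * (q*x)^j / (qPoch q q j * qPoch q q (M-j)) with hs
    set A : ℕ → ℂ := fun j => if j = 0 then 0 else
      (-1:ℂ)^j * q^(j*(j-1)/2) * x^j / (qPoch q q (j-1) * qPoch q q (M+1-j)) with hA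
    set B : ℕ → ℂ := fun j => if j = M+1 then 0 else
      (-1:ℂ)^j * q^(j*(j-1)/2) * (q*x)^j / (qPoch q q j * qPoch q q (M-j)) with hB
    have key : ∀ j ∈ range (M+1+1),
        (1 - q^(M+1)) * ((-1:ℂ)^j * q^(j*(j-1)/2) * x^j / (qPoch q q j * qPoch q q (M+1-j)))
          = A j + B j := by
      intro j hj
      rw [mem_range] at hj
      rcases Nat.eq_zero_or_pos j with hj0 | hjpos
      · subst hj0
        simp only [hA, hB, if_pos rfl, if_neg (by omega : ¬ (0:ℕ) = M+1)]
        simp only [pow_zero, one_mul, mul_one, Nat.zero_mul, Nat.zero_div, Nat.sub_zero, P_zero,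
          one_div, zero_add]
        rw [P_succ M, mul_inv, mul_comm (qPoch q q M)⁻¹ _, ← mul_assoc,
          mul_inv_cancel₀ hM1, one_mul]
      · by_cases hjtop : j = M+1
        · subst hjtop
          simp only [hA, hB, if_pos rfl, if_neg (by omega : ¬ M+1 = 0)]
          rw [show M+1-(M+1) = 0 from by omega, Nat.add_sub_cancel, P_succ M, P_zero,
            mul_one, mul_one, div_mul_eq_div_div, mul_comm, div_mul_cancel₀ _ hM1, add_zero]
        · obtain ⟨a, rfl⟩ : ∃ a, j = a+1 := ⟨j-1, by omega⟩
          obtain ⟨b, rfl⟩ : ∃ b, M = a + b + 1 := ⟨M - a - 1, by omega⟩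
          simp only [hA, hB, if_neg (by omega : ¬ a+1 = 0), if_neg (by omega : ¬ a+1 = a+b+1+1)]
          rw [show a+b+1+1-(a+1) = b+1 from by omega, show a+b+1-(a+1) = b from by omega,
            Nat.add_sub_cancel]
          rw [P_succ a, P_succ b]
          have h1 : (1:ℂ) - q^(a+1) ≠ 0 := one_sub_ne hq1 (by omega)
          have h2 : (1:ℂ) - q^(b+1) ≠ 0 := one_sub_ne hq1 (by omega)
          have hPa := hPM a
          have hPb := hPM b
          field_simp [hPa, hPb, h1, h2]
          ring
    have hAsum : ∑ j ∈ range (M+1+1), A j = -x * ∑ j ∈ range (M+1), s j := by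
      rw [Finset.sum_range_succ' A (M+1)]
      have hA0 : A 0 = 0 := by simp [hA]
      rw [hA0, add_zero, Finset.mul_sum]
      refine Finset.sum_congr rfl fun j hj => ?_
      simp only [hA, if_neg (by omega : ¬ j+1 = 0), Nat.add_sub_cancel, hs]
      rw [show M+1-(j+1) = M - j from by omega, tri_step j, pow_add]
      ring
    have hBsum : ∑ j ∈ range (M+1+1), B j = ∑ j ∈ range (M+1), s j := by
      rw [Finset.sum_range_succ]
      have hB0 : B (M+1) = 0 := by simp [hB]
      rw [hB0, add_zero]
      refine Finset.sum_congr rfl fun j hj => ?_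
      rw [mem_range] at hj
      simp only [hB, if_neg (by omega : ¬ j = M+1), hs]
    have hsum : (1 - q^(M+1)) * (∑ j ∈ range (M+1+1),
        (-1:ℂ)^j * q^(j*(j-1)/2) * x^j / (qPoch q q j * qPoch q q (M+1-j)))
          = (1 - x) * ∑ j ∈ range (M+1), s j := by
      rw [Finset.mul_sum, Finset.sum_congr rfl key, Finset.sum_add_distrib, hAsum, hBsum]
      ring
    have hprod : ∏ i ∈ range (M+1), (1 - x*q^i)
        = (1-x) * ∏ i ∈ range M, (1 - (q*x)*q^i) := by
      rw [Finset.prod_range_succ']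
      have : ∀ i ∈ range M, (1 - x*q^(i+1)) = (1 - (q*x)*q^i) := by
        intro i _
        rw [pow_succ']
        ring
      rw [Finset.prod_congr rfl this]
      simp [mul_comm]
    rw [ih (q*x), ← mul_div_assoc, eq_div_iff (hPM M)] at hsum
    rw [eq_div_iff (hPM (M+1)), P_succ M, hprod]
    linear_combination hsum

lemma vanish (hq : q ≠ 0) (hq1 : ∀ j, 1 ≤ j → q^j ≠ 1) (n m : ℕ) (hm : m + 1 ≤ n) :
    ∑ j ∈ range (2*n+1), (-1:ℂ)^j * q^(j*(j-1)/2) * (q^(1 - (n:ℤ) - ((m:ℤ)+1)))^j /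
      (qPoch q q j * qPoch q q (2*n - j)) = 0 := by
  rw [qbin hq1 (2*n) (q^(1 - (n:ℤ) - ((m:ℤ)+1)))]
  rw [div_eq_zero_iff]
  left
  refine Finset.prod_eq_zero (i := n+m) (by rw [mem_range]; omega) ?_
  rw [← zpow_natCast q (n+m), ← zpow_add₀ hq,
    show (1 - (n:ℤ) - ((m:ℤ)+1)) + ((n+m : ℕ):ℤ) = 0 from by push_cast; ring,
    zpow_zero, sub_self]

/-- The summand of the reflected/vanishing sum. -/
noncomputable def Hf (q : ℂ) (n m j : ℕ) : ℂ :=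
  (-1:ℂ)^(j+n+1) * q^(((j*(j-1)/2 : ℕ):ℤ) + (1 - (n:ℤ) - ((m:ℤ)+1))*(j:ℤ)
      + ((n*(n-1)/2 : ℕ):ℤ) + ((m:ℤ)+1)*(n:ℤ)) / (qPoch q q j * qPoch q q (2*n - j))

lemma Hsum0 (hq : q ≠ 0) (hq1 : ∀ j, 1 ≤ j → q^j ≠ 1) (n m : ℕ) (hm : m + 1 ≤ n) :
    ∑ j ∈ range (2*n+1), Hf q n m j = 0 := by
  have hv := vanish hq hq1 n m hm
  have hpt : ∀ j ∈ range (2*n+1), Hf q n m j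
      = ((-1:ℂ)^(n+1) * q^(((n*(n-1)/2 : ℕ):ℤ) + ((m:ℤ)+1)*(n:ℤ)))
        * ((-1:ℂ)^j * q^(j*(j-1)/2) * (q^(1 - (n:ℤ) - ((m:ℤ)+1)))^j /
            (qPoch q q j * qPoch q q (2*n - j))) := by
    intro j _
    rw [Hf]
    have e1 : q^(((j*(j-1)/2 : ℕ):ℤ) + (1 - (n:ℤ) - ((m:ℤ)+1))*(j:ℤ)
        + ((n*(n-1)/2 : ℕ):ℤ) + ((m:ℤ)+1)*(n:ℤ))
        = q^(((j*(j-1)/2 : ℕ):ℤ)) * q^((1 - (n:ℤ) - ((m:ℤ)+1))*(j:ℤ))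
          * q^(((n*(n-1)/2 : ℕ):ℤ) + ((m:ℤ)+1)*(n:ℤ)) := by
      rw [← zpow_add₀ hq, ← zpow_add₀ hq]
      congr 1
      ring
    rw [e1, zpow_natCast, zpow_mul, zpow_natCast, add_assoc, pow_add]
    ring
  rw [Finset.sum_congr rfl hpt, ← Finset.mul_sum, hv, mul_zero]

lemma expA (n k m : ℕ) :
    (((n+k)*((n+k)-1)/2 : ℕ):ℤ) + (1 - (n:ℤ) - ((m:ℤ)+1))*((n+k : ℕ):ℤ)
      + ((n*(n-1)/2 : ℕ):ℤ) + ((m:ℤ)+1)*(n:ℤ)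
    = ((k*(k+1)/2 : ℕ):ℤ) - ((m:ℤ)+1)*(k:ℤ) := by
  have hA := tri_cast' (n+k)
  have hB := tri_cast' n
  have hC := tri_cast k
  rw [show ((n+k : ℕ):ℤ) = (n:ℤ)+(k:ℤ) from by push_cast; ring] at hA ⊢
  refine mul_right_cancel₀ (two_ne_zero) ?_
  linear_combination hA + hB - hC

lemma expB (n k m : ℕ) (hkn : k ≤ n) :
    (((n-k)*((n-k)-1)/2 : ℕ):ℤ) + (1 - (n:ℤ) - ((m:ℤ)+1))*((n-k : ℕ):ℤ)
      + ((n*(n-1)/2 : ℕ):ℤ) + ((m:ℤ)+1)*(n:ℤ)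
    = ((k*(k+1)/2 : ℕ):ℤ) + (m:ℤ)*(k:ℤ) := by
  have hA := tri_cast' (n-k)
  have hB := tri_cast' n
  have hC := tri_cast k
  rw [show ((n-k : ℕ):ℤ) = (n:ℤ)-(k:ℤ) from by push_cast [hkn]; ring] at hA ⊢
  refine mul_right_cancel₀ (two_ne_zero) ?_
  linear_combination hA + hB - hC

lemma expC (n m : ℕ) :
    ((n*(n-1)/2 : ℕ):ℤ) + (1 - (n:ℤ) - ((m:ℤ)+1))*((n : ℕ):ℤ)
      + ((n*(n-1)/2 : ℕ):ℤ) + ((m:ℤ)+1)*(n:ℤ) = 0 := by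
  have hB := tri_cast' n
  linear_combination hB

lemma Hf_mid (n m : ℕ) : Hf q n m n = -(1/(qPoch q q n)^2) := by
  rw [Hf, expC, zpow_zero, show 2*n - n = n from by omega,
    show (-1:ℂ)^(n+n+1) = -1 from by
      rw [show n+n+1 = 2*n+1 from by ring, pow_succ, pow_mul]; norm_num]
  ring

/-- The theorem's sum with simplified denominators. -/
noncomputable def Gs (q : ℂ) (n : ℕ) (r : ℤ) : ℂ :=
  ∑ k ∈ Finset.Icc 1 n,
    (-1 : ℂ) ^ (k - 1) * q ^ (((k * (k + 1) / 2 : ℕ) : ℤ) - r * k) *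
      (1 - q ^ (2 * r * (k : ℤ))) /
      ((1 - q^k) * qPoch q q (n - k) * qPoch q q (n + k))

lemma Gs_zero (n : ℕ) : Gs q n 0 = 0 := by
  rw [Gs]
  refine Finset.sum_eq_zero fun k _ => ?_
  norm_num

lemma Gs_neg (hq : q ≠ 0) (n : ℕ) (r : ℤ) : Gs q n (-r) = - Gs q n r := by
  rw [Gs, Gs, ← Finset.sum_neg_distrib]
  refine Finset.sum_congr rfl fun k hk => ?_
  have h1 : q ^ (((k * (k + 1) / 2 : ℕ) : ℤ) - r * k) * (1 - q ^ (2 * (r * (k:ℤ))))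
      = q ^ (((k * (k + 1) / 2 : ℕ) : ℤ) - r * k) - q ^ (((k * (k + 1) / 2 : ℕ) : ℤ) + r * k) :=
    split_pow hq _ _
  have h2 : q ^ (((k * (k + 1) / 2 : ℕ) : ℤ) + r * k) * (1 - q ^ (2 * (-(r * (k:ℤ)))))
      = q ^ (((k * (k + 1) / 2 : ℕ) : ℤ) + r * k) - q ^ (((k * (k + 1) / 2 : ℕ) : ℤ) - r * k) := by
    have h := split_pow hq (((k * (k + 1) / 2 : ℕ) : ℤ)) (-(r * (k:ℤ)))
    rw [show ((k * (k + 1) / 2 : ℕ) : ℤ) - -(r*(k:ℤ)) = ((k * (k + 1) / 2 : ℕ) : ℤ) + r*k from by ring,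
      show ((k * (k + 1) / 2 : ℕ) : ℤ) + -(r*(k:ℤ)) = ((k * (k + 1) / 2 : ℕ) : ℤ) - r*k from by ring] at h
    exact h
  rw [show ((k * (k + 1) / 2 : ℕ) : ℤ) - -r * k = ((k * (k + 1) / 2 : ℕ) : ℤ) + r*k from by ring,
    show (2 * -r * (k:ℤ)) = 2*(-(r*(k:ℤ))) from by ring,
    show (2 * r * (k:ℤ)) = 2*(r*(k:ℤ)) from by ring]
  linear_combination (((-1:ℂ)^(k-1))/((1 - q^k) * qPoch q q (n - k) * qPoch q q (n + k))) * (h1 + h2)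

lemma Gs_step (hq : q ≠ 0) (hq1 : ∀ j, 1 ≤ j → q^j ≠ 1) (n m : ℕ) (hm : m + 1 ≤ n) :
    Gs q n ((m:ℤ)+1) = Gs q n (m:ℤ) + 1/(qPoch q q n)^2 := by
  have hP := P_ne_zero hq1
  have hpt : ∀ k ∈ Finset.Icc 1 n,
      (-1 : ℂ) ^ (k - 1) * q ^ (((k * (k + 1) / 2 : ℕ) : ℤ) - ((m:ℤ)+1) * k) *
        (1 - q ^ (2 * ((m:ℤ)+1) * (k : ℤ))) /
        ((1 - q^k) * qPoch q q (n - k) * qPoch q q (n + k))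
      - (-1 : ℂ) ^ (k - 1) * q ^ (((k * (k + 1) / 2 : ℕ) : ℤ) - (m:ℤ) * k) *
        (1 - q ^ (2 * (m:ℤ) * (k : ℤ))) /
        ((1 - q^k) * qPoch q q (n - k) * qPoch q q (n + k))
      = Hf q n m (n+k) + Hf q n m (n-k) := by
    intro k hk
    rw [Finset.mem_Icc] at hk
    obtain ⟨hk1, hkn⟩ := hk
    have hw : (1:ℂ) - q^k ≠ 0 := one_sub_ne hq1 hk1
    have hH1 : Hf q n m (n+k)
        = (-1:ℂ)^(k-1) * q^(((k * (k + 1) / 2 : ℕ) : ℤ) - ((m:ℤ)+1)*(k:ℤ))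
          / (qPoch q q (n+k) * qPoch q q (n-k)) := by
      rw [Hf, expA n k m, show 2*n - (n+k) = n-k from by omega,
        show (-1:ℂ)^((n+k)+n+1) = (-1)^(k-1) from by
          rw [show (n+k)+n+1 = (k-1) + 2*(n+1) from by omega, pow_add, pow_mul]; norm_num]
    have hH2 : Hf q n m (n-k)
        = (-1:ℂ)^(k-1) * q^(((k * (k + 1) / 2 : ℕ) : ℤ) + (m:ℤ)*(k:ℤ))
          / (qPoch q q (n-k) * qPoch q q (n+k)) := by
      rw [Hf, expB n k m hkn, show 2*n - (n-k) = n+k from by omega,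
        show (-1:ℂ)^((n-k)+n+1) = (-1)^(k-1) from by
          rw [show (n-k)+n+1 = (k-1) + 2*(n+1-k) from by omega, pow_add, pow_mul]; norm_num]
    have key : q^(((k * (k + 1) / 2 : ℕ) : ℤ) - ((m:ℤ)+1)*(k:ℤ)) * (1 - q^(2*((m:ℤ)+1)*(k:ℤ)))
        - q^(((k * (k + 1) / 2 : ℕ) : ℤ) - (m:ℤ)*(k:ℤ)) * (1 - q^(2*(m:ℤ)*(k:ℤ)))
        = (1 - q^k) * (q^(((k * (k + 1) / 2 : ℕ) : ℤ) - ((m:ℤ)+1)*(k:ℤ))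
            + q^(((k * (k + 1) / 2 : ℕ) : ℤ) + (m:ℤ)*(k:ℤ))) := by
      rw [show (2*((m:ℤ)+1)*(k:ℤ)) = 2*(((m:ℤ)+1)*(k:ℤ)) from by ring,
        show (2*(m:ℤ)*(k:ℤ)) = 2*((m:ℤ)*(k:ℤ)) from by ring,
        split_pow hq _ _, split_pow hq _ _]
      have h1 : q^k * q^(((k * (k + 1) / 2 : ℕ) : ℤ) - ((m:ℤ)+1)*(k:ℤ))
          = q^(((k * (k + 1) / 2 : ℕ) : ℤ) - (m:ℤ)*(k:ℤ)) := by
        rw [← zpow_natCast q k, ← zpow_add₀ hq]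
        congr 1
        ring
      have h2 : q^k * q^(((k * (k + 1) / 2 : ℕ) : ℤ) + (m:ℤ)*(k:ℤ))
          = q^(((k * (k + 1) / 2 : ℕ) : ℤ) + ((m:ℤ)+1)*(k:ℤ)) := by
        rw [← zpow_natCast q k, ← zpow_add₀ hq]
        congr 1
        ring
      linear_combination h1 + h2
    calc
      (-1 : ℂ) ^ (k - 1) * q ^ (((k * (k + 1) / 2 : ℕ) : ℤ) - ((m:ℤ)+1) * k) *
          (1 - q ^ (2 * ((m:ℤ)+1) * (k : ℤ))) /
          ((1 - q^k) * qPoch q q (n - k) * qPoch q q (n + k))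
        - (-1 : ℂ) ^ (k - 1) * q ^ (((k * (k + 1) / 2 : ℕ) : ℤ) - (m:ℤ) * k) *
          (1 - q ^ (2 * (m:ℤ) * (k : ℤ))) /
          ((1 - q^k) * qPoch q q (n - k) * qPoch q q (n + k))
          = ((1 - q^k) * ((-1:ℂ)^(k-1) * (q^(((k * (k + 1) / 2 : ℕ) : ℤ) - ((m:ℤ)+1)*(k:ℤ))
              + q^(((k * (k + 1) / 2 : ℕ) : ℤ) + (m:ℤ)*(k:ℤ)))))
            / ((1 - q^k) * (qPoch q q (n - k) * qPoch q q (n + k))) := by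
          rw [div_sub_div_same]
          rw [show ((1 - q^k) * qPoch q q (n - k) * qPoch q q (n + k))
            = ((1 - q^k) * (qPoch q q (n - k) * qPoch q q (n + k))) from by ring]
          congr 1
          linear_combination (-1:ℂ)^(k-1) * key
      _ = ((-1:ℂ)^(k-1) * (q^(((k * (k + 1) / 2 : ℕ) : ℤ) - ((m:ℤ)+1)*(k:ℤ))
              + q^(((k * (k + 1) / 2 : ℕ) : ℤ) + (m:ℤ)*(k:ℤ))))
            / (qPoch q q (n - k) * qPoch q q (n + k)) :=
          mul_div_mul_left _ _ hw
      _ = Hf q n m (n+k) + Hf q n m (n-k) := by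
          rw [hH1, hH2]
          ring
  have hsub : Gs q n ((m:ℤ)+1) - Gs q n (m:ℤ)
      = ∑ k ∈ Finset.Icc 1 n, (Hf q n m (n+k) + Hf q n m (n-k)) := by
    rw [Gs, Gs, ← Finset.sum_sub_distrib]
    exact Finset.sum_congr rfl hpt
  have hdecomp : ∑ j ∈ range (2*n+1), Hf q n m j
      = Hf q n m n + ∑ k ∈ Finset.Icc 1 n, (Hf q n m (n+k) + Hf q n m (n-k)) := by
    rw [show 2*n+1 = n + (n+1) from by omega, Finset.sum_range_add,
      Finset.sum_range_succ' (fun i => Hf q n m (n+i)) n]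
    have h1 : ∑ j ∈ range n, Hf q n m j = ∑ i ∈ range n, Hf q n m (n - (i+1)) := by
      have hr := Finset.sum_range_reflect (fun j => Hf q n m j) n
      rw [← hr]
      exact Finset.sum_congr rfl fun i hi => by rw [show n-1-i = n-(i+1) from by omega]
    have h2 : ∑ k ∈ Finset.Icc 1 n, Hf q n m (n+k) = ∑ i ∈ range n, Hf q n m (n+(i+1)) := by
      rw [← Finset.Ico_add_one_right_eq_Icc, Finset.sum_Ico_eq_sum_range]
      refine Finset.sum_congr (by norm_num) fun i hi => by rw [add_comm 1 i]
    have h3 : ∑ k ∈ Finset.Icc 1 n, Hf q n m (n-k) = ∑ i ∈ range n, Hf q n m (n-(i+1)) := by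
      rw [← Finset.Ico_add_one_right_eq_Icc, Finset.sum_Ico_eq_sum_range]
      refine Finset.sum_congr (by norm_num) fun i hi => by rw [add_comm 1 i]
    rw [Finset.sum_add_distrib, h1, h2, h3, Nat.add_zero]
    ring
  have h0 := Hsum0 hq hq1 n m hm
  rw [hdecomp, ← hsub, Hf_mid] at h0
  linear_combination h0

lemma Gs_nat (hq : q ≠ 0) (hq1 : ∀ j, 1 ≤ j → q^j ≠ 1) (n : ℕ) :
    ∀ m : ℕ, m ≤ n → Gs q n (m:ℤ) = (m:ℂ) / (qPoch q q n)^2 := by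
  intro m
  induction m with
  | zero => intro _; simp [Gs_zero]
  | succ m ih =>
    intro hm
    rw [show ((m+1 : ℕ):ℤ) = (m:ℤ)+1 from by push_cast; ring,
      Gs_step hq hq1 n m (by omega), ih (by omega)]
    rw [← add_div]
    push_cast
    ring

end StmtAux

/-- The `m = n`, `p = q` specialization. -/
theorem stmt5 (n : ℕ) (r : ℤ) (hr : |r| ≤ (n : ℤ)) (q : ℂ) (hq : q ≠ 0)
    (hq1 : ∀ j, 1 ≤ j → q ^ j ≠ 1) :
    ∑ k ∈ Finset.Icc 1 n,
        (-1 : ℂ) ^ (k - 1) * q ^ (((k * (k + 1) / 2 : ℕ) : ℤ) - r * k) *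
          (1 - q ^ (2 * r * (k : ℤ))) /
          (qPoch q q k * qPoch q q (n - k) * qPoch (q ^ k) q (n + 1))
      = (r : ℂ) / (qPoch q q n) ^ 2 := by
  have hGs : ∑ k ∈ Finset.Icc 1 n,
        (-1 : ℂ) ^ (k - 1) * q ^ (((k * (k + 1) / 2 : ℕ) : ℤ) - r * k) *
          (1 - q ^ (2 * r * (k : ℤ))) /
          (qPoch q q k * qPoch q q (n - k) * qPoch (q ^ k) q (n + 1))
      = StmtAux.Gs q n r := by
    rw [StmtAux.Gs]
    refine Finset.sum_congr rfl fun k hk => ?_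
    rw [Finset.mem_Icc] at hk
    have hd : qPoch q q k * qPoch q q (n-k) * qPoch (q^k) q (n+1)
        = (1 - q^k) * qPoch q q (n-k) * qPoch q q (n+k) := by
      have h := StmtAux.denom_key (q := q) n k hk.1
      linear_combination qPoch q q (n-k) * h
    rw [hd]
  rw [hGs]
  rcases le_or_gt 0 r with h | h
  · obtain ⟨m, rfl⟩ : ∃ m : ℕ, r = (m:ℤ) := ⟨r.toNat, (Int.toNat_of_nonneg h).symm⟩
    have hm : m ≤ n := by
      rw [abs_of_nonneg h] at hr
      exact_mod_cast hr
    rw [StmtAux.Gs_nat hq hq1 n m hm]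
    push_cast
    ring
  · obtain ⟨m, rfl⟩ : ∃ m : ℕ, r = -(m:ℤ) := ⟨(-r).toNat, by omega⟩
    have hm : m ≤ n := by
      rw [abs_neg, abs_of_nonneg (Int.natCast_nonneg m)] at hr
      exact_mod_cast hr
    rw [StmtAux.Gs_neg hq, StmtAux.Gs_nat hq hq1 n m hm]
    push_cast
    ring
end

section
/- For all r ≥ 0 and |q| < 1: ∑_{k=1}^{∞} (-1)^{k-1} q^{k(k+1)/2 - rk} / ((q;q)_k (1 - q^k)) = r + ∑_{k=1}^{∞} q^k / (1 - q^k). -/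
open Finset

namespace GKU

variable (q : ℂ)

noncomputable def P (n : ℕ) : ℂ := ∏ j ∈ Finset.range n, (1 - q ^ (j+1))

noncomputable def B (n k : ℕ) : ℂ := if k ≤ n then P q n / (P q k * P q (n-k)) else 0

variable {q}

lemma hfac (hq1 : ‖q‖ < 1) (j : ℕ) : (1 : ℂ) - q ^ (j+1) ≠ 0 := by
  intro h
  have h2 : q ^ (j+1) = 1 := by linear_combination -h
  have h3 : ‖q ^ (j+1)‖ < 1 := by
    rw [norm_pow]
    calc ‖q‖ ^ (j+1) ≤ ‖q‖ ^ 1 := by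
          apply pow_le_pow_of_le_one (norm_nonneg _) hq1.le; omega
      _ < 1 := by simpa using hq1
  rw [h2] at h3; simp at h3

lemma P_ne (hq1 : ‖q‖ < 1) (n : ℕ) : P q n ≠ 0 := by
  apply Finset.prod_ne_zero_iff.2
  intro j _; exact hfac hq1 j

lemma P_zero : P q 0 = 1 := by simp [P]

lemma P_succ (n : ℕ) : P q (n+1) = P q n * (1 - q ^ (n+1)) := by
  rw [P, Finset.prod_range_succ]; rfl

lemma B_zero (hq1 : ‖q‖ < 1) (n : ℕ) : B q n 0 = 1 := by
  simp [B, P_zero, div_self (P_ne hq1 n)]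

lemma B_of_gt {n k : ℕ} (h : n < k) : B q n k = 0 := by
  simp [B, Nat.not_le.2 h]

lemma pascal (hq1 : ‖q‖ < 1) (m i : ℕ) :
    B q (m+1) (i+1) = B q m (i+1) + q ^ (m-i) * B q m i := by
  rcases lt_trichotomy i m with h | rfl | h
  · obtain ⟨d, rfl⟩ : ∃ d, m = i + 1 + d := ⟨m - (i+1), by omega⟩
    rw [B, B, B, if_pos (by omega), if_pos (by omega), if_pos (by omega)]
    have e1 : i + 1 + d + 1 - (i+1) = d + 1 := by omega
    have e2 : i + 1 + d - (i+1) = d := by omega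
    have e3 : i + 1 + d - i = d + 1 := by omega
    rw [e1, e2, e3]
    have e4 : P q (i+1+d+1) = P q (i+1+d) * (1 - q^(i+1) * q^(d+1)) := by
      rw [P_succ, ← pow_add]
      norm_num [show i + 1 + d + 1 = i + 1 + (d + 1) from by omega]
    rw [e4, P_succ, P_succ]
    have h1 : (1:ℂ) - q^(i+1) ≠ 0 := hfac hq1 i
    have h2 : (1:ℂ) - q^(d+1) ≠ 0 := hfac hq1 d
    have h3 := P_ne hq1 i
    have h4 := P_ne hq1 d
    field_simp
    ring
  · rw [B, B, if_pos le_rfl, if_neg (by omega), B, if_pos le_rfl]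
    simp only [Nat.sub_self, P_zero, mul_one, one_mul, pow_zero]
    rw [div_self (P_ne hq1 _), div_self (P_ne hq1 _)]
    norm_num
  · rw [B_of_gt (by omega), B_of_gt (by omega), B_of_gt (by omega)]
    simp

/-- Gauss's identity / q-binomial theorem. -/
lemma gauss (hq1 : ‖q‖ < 1) (m : ℕ) (x : ℂ) :
    ∑ i ∈ range (m+1), (-1 : ℂ) ^ i * q ^ (i*(i-1)/2) * x ^ i * B q m i
      = ∏ j ∈ range m, (1 - x * q ^ j) := by
  induction m with
  | zero => simp [B_zero hq1]
  | succ m ih =>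
    rw [Finset.sum_range_succ']
    simp only [pascal hq1 m, mul_add, Finset.sum_add_distrib]
    have hA1 : ∑ i ∈ range (m+1),
        (-1:ℂ) ^ (i+1) * q ^ ((i+1)*(i+1-1)/2) * x ^ (i+1) * B q m (i+1)
          + (-1:ℂ)^0 * q ^ (0*(0-1)/2) * x^0 * B q (m+1) 0
        = ∏ j ∈ range m, (1 - x * q ^ j) := by
      rw [show B q (m+1) 0 = B q m 0 from by rw [B_zero hq1, B_zero hq1],
        ← Finset.sum_range_succ' (fun i => (-1:ℂ) ^ i * q ^ (i*(i-1)/2) * x ^ i * B q m i) (m+1),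
        Finset.sum_range_succ, B_of_gt (Nat.lt_succ_self m), mul_zero, add_zero, ih]
    have hA2 : ∑ i ∈ range (m+1),
        (-1:ℂ) ^ (i+1) * q ^ ((i+1)*(i+1-1)/2) * x ^ (i+1) * (q ^ (m-i) * B q m i)
        = -(x * q ^ m) * ∏ j ∈ range m, (1 - x * q ^ j) := by
      rw [← ih, Finset.mul_sum]
      apply Finset.sum_congr rfl
      intro i hi
      have him : i ≤ m := by simpa using Nat.lt_succ_iff.mp (Finset.mem_range.mp hi)
      have he : (i+1)*(i+1-1)/2 + (m-i) = i*(i-1)/2 + m := by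
        rw [Nat.triangle_succ]; omega
      calc (-1:ℂ) ^ (i+1) * q ^ ((i+1)*(i+1-1)/2) * x ^ (i+1) * (q ^ (m-i) * B q m i)
          = -((-1:ℂ)^i * x^i * B q m i * x) * (q ^ ((i+1)*(i+1-1)/2) * q ^ (m-i)) := by
            rw [pow_succ, pow_succ]; ring
        _ = -((-1:ℂ)^i * x^i * B q m i * x) * (q ^ (i*(i-1)/2) * q ^ m) := by
            rw [← pow_add, ← pow_add, he]
        _ = -(x * q^m) * ((-1:ℂ)^i * q ^ (i*(i-1)/2) * x^i * B q m i) := by ring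
    calc _ = (∑ i ∈ range (m+1),
        (-1:ℂ) ^ (i+1) * q ^ ((i+1)*(i+1-1)/2) * x ^ (i+1) * B q m (i+1)
          + (-1:ℂ)^0 * q ^ (0*(0-1)/2) * x^0 * B q (m+1) 0)
        + ∑ i ∈ range (m+1),
        (-1:ℂ) ^ (i+1) * q ^ ((i+1)*(i+1-1)/2) * x ^ (i+1) * (q ^ (m-i) * B q m i) := by
          ring
      _ = ∏ j ∈ range m, (1 - x * q ^ j) + -(x * q ^ m) * ∏ j ∈ range m, (1 - x * q ^ j) := by
          rw [hA1, hA2]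
      _ = ∏ j ∈ range (m+1), (1 - x * q ^ j) := by
          rw [Finset.prod_range_succ]; ring

end GKU

namespace GKU
open Finset

variable {q : ℂ}

lemma gauss_zero (hq : q ≠ 0) (hq1 : ‖q‖ < 1) {r m : ℕ} (hrm : r < m) :
    ∑ i ∈ range (m+1), (-1:ℂ)^i * q^(i*(i-1)/2) * ((q^r)⁻¹)^i * B q m i = 0 := by
  rw [gauss hq1 m ((q^r)⁻¹)]
  apply Finset.prod_eq_zero (Finset.mem_range.2 hrm)
  rw [inv_mul_cancel₀ (pow_ne_zero r hq), sub_self]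

lemma gauss_one (hq : q ≠ 0) (hq1 : ‖q‖ < 1) {r m : ℕ} (hrm : r < m) :
    ∑ k ∈ range m, (-1:ℂ)^k * q^((k+1)*k/2) * ((q^r)⁻¹)^(k+1) * B q m (k+1) = 1 := by
  have h0 := gauss_zero hq hq1 hrm
  rw [Finset.sum_range_succ'] at h0
  simp only [pow_zero, mul_one, one_mul, Nat.zero_mul, Nat.zero_div, B_zero hq1] at h0
  have h1 : ∀ k ∈ range m,
      (-1:ℂ)^(k+1) * q^((k+1)*(k+1-1)/2) * ((q^r)⁻¹)^(k+1) * B q m (k+1)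
        = -((-1:ℂ)^k * q^((k+1)*k/2) * ((q^r)⁻¹)^(k+1) * B q m (k+1)) := by
    intro k _
    rw [show k+1-1 = k from rfl, pow_succ]
    ring
  rw [Finset.sum_congr rfl h1, Finset.sum_neg_distrib] at h0
  linear_combination -h0

/-- summand of the finite sum -/
noncomputable def u (q : ℂ) (r n k : ℕ) : ℂ :=
  (-1)^k * q^((k+1)*(k+2)/2) * ((q^r)⁻¹)^(k+1) * B q n (k+1) / (1 - q^(k+1))

noncomputable def S (q : ℂ) (r n : ℕ) : ℂ := ∑ k ∈ range n, u q r n k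

noncomputable def L (q : ℂ) (n : ℕ) : ℂ := ∑ k ∈ range n, q^(k+1) / (1 - q^(k+1))

lemma Bstep (hq1 : ‖q‖ < 1) {n k : ℕ} (hk : k ≤ n) :
    B q n k * (1 - q^(n+1)) = B q (n+1) (k+1) * (1 - q^(k+1)) := by
  rw [B, B, if_pos hk, if_pos (by omega)]
  rw [show n+1-(k+1) = n-k from by omega, P_succ, P_succ]
  have h1 := P_ne hq1 n
  have h2 := P_ne hq1 k
  have h3 := P_ne hq1 (n-k)
  have h4 := hfac hq1 k
  have h5 := hfac hq1 n
  field_simp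

lemma step_n (hq : q ≠ 0) (hq1 : ‖q‖ < 1) {r n : ℕ} (hrn : r ≤ n) :
    S q r (n+1) = S q r n + q^(n+1) / (1 - q^(n+1)) := by
  have key : ∀ k ∈ range (n+1), u q r (n+1) k
      = u q r n k + q^(n+1) * ((-1:ℂ)^k * q^((k+1)*k/2) * ((q^r)⁻¹)^(k+1) * B q (n+1) (k+1))
          / (1 - q^(n+1)) := by
    intro k hk
    have hkn : k ≤ n := Nat.lt_succ_iff.mp (Finset.mem_range.mp hk)
    have he : (k+1)*(k+2)/2 + (n-k) = (n+1) + (k+1)*k/2 := by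
      have h1 : (k+1)*(k+2) = (k+2)*(k+1) := by ring
      have h2 : (k+2)*(k+1)/2 = (k+1)*k/2 + (k+1) := by
        simpa using Nat.triangle_succ (k+1)
      omega
    have hpow : q^((k+1)*(k+2)/2) * q^(n-k) = q^(n+1) * q^((k+1)*k/2) := by
      rw [← pow_add, ← pow_add, he]
    have hB := Bstep hq1 hkn
    have hd1 : (1:ℂ) - q^(k+1) ≠ 0 := hfac hq1 k
    have hd2 : (1:ℂ) - q^(n+1) ≠ 0 := hfac hq1 n
    have hu : u q r (n+1) k = u q r n k + (-1:ℂ)^k * q^((k+1)*(k+2)/2) * ((q^r)⁻¹)^(k+1)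
        * (q^(n-k) * B q n k) / (1 - q^(k+1)) := by
      rw [u, u, pascal hq1 n k]; ring
    rw [hu]
    congr 1
    rw [div_eq_div_iff hd1 hd2]
    calc (-1:ℂ)^k * q^((k+1)*(k+2)/2) * ((q^r)⁻¹)^(k+1) * (q^(n-k) * B q n k) * (1 - q^(n+1))
        = ((-1:ℂ)^k * ((q^r)⁻¹)^(k+1)) * (q^((k+1)*(k+2)/2) * q^(n-k))
            * (B q n k * (1 - q^(n+1))) := by ring
      _ = ((-1:ℂ)^k * ((q^r)⁻¹)^(k+1)) * (q^(n+1) * q^((k+1)*k/2))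
            * (B q (n+1) (k+1) * (1 - q^(k+1))) := by rw [hpow, hB]
      _ = q^(n+1) * ((-1:ℂ)^k * q^((k+1)*k/2) * ((q^r)⁻¹)^(k+1) * B q (n+1) (k+1))
            * (1 - q^(k+1)) := by ring
  have hg := gauss_one hq hq1 (show r < n+1 by omega) (q := q)
  have h2 : ∑ k ∈ range (n+1), q^(n+1) * ((-1:ℂ)^k * q^((k+1)*k/2) * ((q^r)⁻¹)^(k+1)
        * B q (n+1) (k+1)) / (1 - q^(n+1)) = q^(n+1)/(1-q^(n+1)) := by
    rw [← Finset.sum_div, ← Finset.mul_sum, hg, mul_one]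
  have h3 : ∑ k ∈ range (n+1), u q r n k = S q r n := by
    rw [Finset.sum_range_succ]
    have : u q r n n = 0 := by
      rw [u, B_of_gt (Nat.lt_succ_self n)]
      simp
    rw [this, add_zero, S]
  rw [S, Finset.sum_congr rfl key, Finset.sum_add_distrib, h2, h3]

end GKU

namespace GKU
open Finset

variable {q : ℂ}

lemma step_r (hq : q ≠ 0) (hq1 : ‖q‖ < 1) {r n : ℕ} (hrn : r + 1 ≤ n) :
    S q (r+1) n = S q r n + 1 := by
  have key : ∀ k ∈ range n, u q (r+1) n k
      = u q r n k + (-1:ℂ)^k * q^((k+1)*k/2) * ((q^r)⁻¹)^(k+1) * B q n (k+1) := by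
    intro k _
    have hd1 : (1:ℂ) - q^(k+1) ≠ 0 := hfac hq1 k
    have hx : ((q^(r+1))⁻¹ : ℂ) * q = (q^r)⁻¹ := by
      field_simp
      rw [pow_succ]; ring
    have hx2 : ((q^(r+1))⁻¹ : ℂ)^(k+1) * q^(k+1) = ((q^r)⁻¹)^(k+1) := by
      rw [← mul_pow, hx]
    have he : (k+1)*(k+2)/2 = (k+1)*k/2 + (k+1) := by
      have h1 : (k+1)*(k+2) = (k+2)*(k+1) := by ring
      have h2 : (k+2)*(k+1)/2 = (k+1)*k/2 + (k+1) := by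
        simpa using Nat.triangle_succ (k+1)
      omega
    have hpow : (q:ℂ)^((k+1)*(k+2)/2) = q^((k+1)*k/2) * q^(k+1) := by
      rw [← pow_add, he]
    have hA : u q (r+1) n k
        = ((-1:ℂ)^k * q^((k+1)*k/2) * ((q^r)⁻¹)^(k+1) * B q n (k+1)) / (1 - q^(k+1)) := by
      rw [u, hpow, ← hx2]; ring
    have hBq : u q r n k
        = ((-1:ℂ)^k * q^((k+1)*k/2) * ((q^r)⁻¹)^(k+1) * B q n (k+1)) * q^(k+1)
          / (1 - q^(k+1)) := by
      rw [u, hpow]; ring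
    rw [hA, hBq]
    field_simp
    ring
  rw [S, Finset.sum_congr rfl key, Finset.sum_add_distrib, ← S,
    gauss_one hq hq1 (show r < n from hrn)]

lemma main_zero (hq : q ≠ 0) (hq1 : ‖q‖ < 1) (n : ℕ) : S q 0 n = L q n := by
  induction n with
  | zero => simp [S, L]
  | succ n ih => rw [step_n hq hq1 (Nat.zero_le n), ih, L, L, Finset.sum_range_succ]

lemma main_fin (hq : q ≠ 0) (hq1 : ‖q‖ < 1) (r : ℕ) :
    ∀ n, r ≤ n → S q r n = r + L q n := by
  induction r with
  | zero => intro n _; rw [main_zero hq hq1 n]; simp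
  | succ r ih =>
    intro n hn
    rw [step_r hq hq1 hn, ih n (by omega)]
    push_cast
    ring

end GKU

namespace GKU
open Finset Filter Topology

variable {q : ℂ}

lemma B_closed (hq1 : ‖q‖ < 1) {n k : ℕ} (hk : k ≤ n) :
    B q n k = (∏ j ∈ range k, (1 - q^(n-k+j+1))) / P q k := by
  obtain ⟨d, rfl⟩ : ∃ d, n = d + k := ⟨n-k, by omega⟩
  rw [B, if_pos hk, show d + k - k = d from by omega]
  rw [P, Finset.prod_range_add, ← P]
  rw [div_eq_div_iff (mul_ne_zero (P_ne hq1 k) (P_ne hq1 d)) (P_ne hq1 k)]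
  ring

lemma B_norm_le (hq1 : ‖q‖ < 1) (n k : ℕ) :
    ‖B q n k‖ ≤ (2 / (1 - ‖q‖))^k := by
  have h1q : (0:ℝ) < 1 - ‖q‖ := by linarith
  by_cases hk : k ≤ n
  · rw [B_closed hq1 hk, norm_div]
    have hnum : ‖∏ j ∈ range k, (1 - q^(n-k+j+1))‖ ≤ 2^k := by
      rw [norm_prod]
      calc ∏ j ∈ range k, ‖1 - q^(n-k+j+1)‖ ≤ ∏ j ∈ range k, 2 := by
            apply Finset.prod_le_prod
            · intro j _; positivity
            · intro j _
              calc ‖1 - q^(n-k+j+1)‖ ≤ ‖(1:ℂ)‖ + ‖q^(n-k+j+1)‖ := norm_sub_le _ _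
                _ ≤ 1 + 1 := by
                    rw [norm_one, norm_pow]
                    have : ‖q‖^(n-k+j+1) ≤ 1 := by
                      apply pow_le_one₀ (norm_nonneg _) hq1.le
                    linarith
                _ = 2 := by norm_num
        _ = 2^k := by simp
    have hden : (1 - ‖q‖)^k ≤ ‖P q k‖ := by
      rw [P, norm_prod, show (1 - ‖q‖)^k = ∏ j ∈ range k, (1 - ‖q‖) from by simp]
      apply Finset.prod_le_prod
      · intro j _; linarith
      · intro j _
        have h2 : ‖q^(j+1)‖ ≤ ‖q‖ := by
          rw [norm_pow]
          apply pow_le_of_le_one (norm_nonneg _) hq1.le; omega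
        calc 1 - ‖q‖ ≤ 1 - ‖q^(j+1)‖ := by linarith
          _ ≤ ‖1 - q^(j+1)‖ := by
              have := norm_sub_norm_le (1:ℂ) (q^(j+1))
              simpa using this
      -- prod over range k
    have hPpos : 0 < ‖P q k‖ := norm_pos_iff.2 (P_ne hq1 k)
    rw [div_pow]
    exact div_le_div₀ (by positivity) hnum (by positivity) hden
  · rw [B, if_neg hk]
    simp only [norm_zero]
    positivity

lemma B_tendsto (hq1 : ‖q‖ < 1) (k : ℕ) :
    Tendsto (fun n => B q n k) atTop (𝓝 ((P q k)⁻¹)) := by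
  have hev : ∀ᶠ n in atTop, B q n k
      = (∏ j ∈ range k, (1 - q^(n-k+j+1))) / P q k := by
    filter_upwards [eventually_ge_atTop k] with n hn
    exact B_closed hq1 hn
  have hprod : Tendsto (fun n => ∏ j ∈ range k, (1 - q^(n-k+j+1))) atTop (𝓝 1) := by
    have := tendsto_finset_prod (f := fun (j : ℕ) (n : ℕ) => (1 - q^(n-k+j+1)))
      (x := atTop) (a := fun _ => (1:ℂ)) (range k) ?_
    · simpa using this
    · intro j _
      have h1 : Tendsto (fun n : ℕ => n - k + j + 1) atTop atTop := by
        apply tendsto_atTop_atTop.2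
        intro b
        exact ⟨b + k, fun a ha => by omega⟩
      have h2 : Tendsto (fun n : ℕ => q^(n-k+j+1)) atTop (𝓝 0) :=
        (tendsto_pow_atTop_nhds_zero_of_norm_lt_one hq1).comp h1
      simpa using tendsto_const_nhds.sub h2
  have := hprod.div_const (P q k)
  rw [one_div] at this
  exact Tendsto.congr' (hev.mono fun n h => h.symm) this

end GKU

namespace GKU
open Finset Filter Topology

variable {q : ℂ}

noncomputable def bnd (q : ℂ) (r k : ℕ) : ℝ :=
  ‖q‖^((k+1)*(k+2)/2) * (‖((q^r)⁻¹ : ℂ)‖ * (2/(1-‖q‖)))^(k+1) / (1-‖q‖)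

lemma u_le_bnd (hq1 : ‖q‖ < 1) (r n k : ℕ) : ‖u q r n k‖ ≤ bnd q r k := by
  have h1q : (0:ℝ) < 1 - ‖q‖ := by linarith
  rw [u, norm_div, bnd]
  apply div_le_div₀ (by positivity) _ h1q
  · calc 1 - ‖q‖ ≤ 1 - ‖q^(k+1)‖ := by
          have : ‖q^(k+1)‖ ≤ ‖q‖ := by
            rw [norm_pow]; apply pow_le_of_le_one (norm_nonneg _) hq1.le; omega
          linarith
      _ ≤ ‖1 - q^(k+1)‖ := by simpa using norm_sub_norm_le (1:ℂ) (q^(k+1))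
  · rw [mul_pow]
    calc ‖(-1:ℂ)^k * q^((k+1)*(k+2)/2) * ((q^r)⁻¹)^(k+1) * B q n (k+1)‖
        = ‖q‖^((k+1)*(k+2)/2) * ‖((q^r)⁻¹:ℂ)‖^(k+1) * ‖B q n (k+1)‖ := by
          simp [norm_mul, norm_pow]
      _ ≤ ‖q‖^((k+1)*(k+2)/2) * ‖((q^r)⁻¹:ℂ)‖^(k+1) * (2/(1-‖q‖))^(k+1) := by
          apply mul_le_mul_of_nonneg_left (B_norm_le hq1 n (k+1)) (by positivity)
      _ = ‖q‖^((k+1)*(k+2)/2) * (‖((q^r)⁻¹:ℂ)‖^(k+1) * (2/(1-‖q‖))^(k+1)) := by ring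

lemma bnd_nonneg (hq1 : ‖q‖ < 1) (r k : ℕ) : 0 ≤ bnd q r k := by
  have h1q : (0:ℝ) < 1 - ‖q‖ := by linarith
  rw [bnd]; positivity

set_option maxHeartbeats 1000000 in
lemma bnd_summable (hq1 : ‖q‖ < 1) (r : ℕ) : Summable (bnd q r) := by
  have h1q : (0:ℝ) < 1 - ‖q‖ := by linarith
  set c : ℝ := ‖((q^r)⁻¹ : ℂ)‖ * (2/(1-‖q‖)) with hc
  have hc0 : 0 ≤ c := by positivity
  have hstep : ∀ k, bnd q r (k+1) = bnd q r k * (‖q‖^(k+2) * c) := by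
    intro k
    have he : (k+2)*(k+3)/2 = (k+1)*(k+2)/2 + (k+2) := by
      have h1 : (k+2)*(k+3) = (k+3)*(k+2) := by ring
      have h2 : (k+1)*(k+2) = (k+2)*(k+1) := by ring
      have h3 : (k+3)*(k+2)/2 = (k+2)*(k+1)/2 + (k+2) := by
        simpa using Nat.triangle_succ (k+2)
      omega
    rw [bnd, bnd, show k+1+1 = k+2 from rfl, show k+1+2 = k+3 from rfl, he, pow_add,
      pow_succ c (k+1)]
    ring
  have hto : Tendsto (fun k : ℕ => ‖q‖^(k+2) * c) atTop (𝓝 0) := by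
    have h0 : Tendsto (fun k : ℕ => ‖q‖^k) atTop (𝓝 0) := by
      apply tendsto_pow_atTop_nhds_zero_of_norm_lt_one
      rwa [Real.norm_of_nonneg (norm_nonneg q)]
    have h1 : Tendsto (fun k : ℕ => k + 2) atTop atTop :=
      tendsto_atTop_atTop.2 fun b => ⟨b, fun a ha => by omega⟩
    simpa using (h0.comp h1).mul_const c
  apply summable_of_ratio_norm_eventually_le (r := 1/2) (by norm_num)
  have hev : ∀ᶠ k : ℕ in atTop, ‖q‖^(k+2) * c ≤ 1/2 :=
    hto.eventually_le_const (show (0:ℝ) < 1/2 by norm_num)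
  filter_upwards [hev] with k hk
  rw [Real.norm_of_nonneg (bnd_nonneg hq1 r _), Real.norm_of_nonneg (bnd_nonneg hq1 r _),
    hstep k]
  calc bnd q r k * (‖q‖^(k+2) * c) ≤ bnd q r k * (1/2) := by
        apply mul_le_mul_of_nonneg_left hk (bnd_nonneg hq1 r k)
    _ = 1/2 * bnd q r k := by ring

noncomputable def gl (q : ℂ) (r k : ℕ) : ℂ :=
  (-1)^k * q^((k+1)*(k+2)/2) * ((q^r)⁻¹)^(k+1) * (P q (k+1))⁻¹ / (1 - q^(k+1))

lemma tendsto_S (hq1 : ‖q‖ < 1) (r : ℕ) :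
    Tendsto (fun n => S q r n) atTop (𝓝 (∑' k, gl q r k)) := by
  have key : Tendsto (fun n => ∑' k, u q r n k) atTop (𝓝 (∑' k, gl q r k)) := by
    apply tendsto_tsum_of_dominated_convergence (bnd_summable hq1 r)
    · intro k
      have h := (Filter.Tendsto.mul
          (tendsto_const_nhds (x := ((-1:ℂ)^k * q^((k+1)*(k+2)/2) * ((q^r)⁻¹)^(k+1))))
          (B_tendsto hq1 (k+1))).div_const (1 - q^(k+1))
      exact h
    · exact Filter.Eventually.of_forall (fun n k => u_le_bnd hq1 r n k)
  have heq : ∀ n, ∑' k, u q r n k = S q r n := by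
    intro n
    rw [S]
    apply tsum_eq_sum
    intro k hk
    have : n < k + 1 := by
      simp only [Finset.mem_range, not_lt] at hk; omega
    rw [u, B_of_gt this]
    simp
  exact key.congr heq

lemma summable_rhs (hq1 : ‖q‖ < 1) : Summable (fun k : ℕ => q^(k+1) / (1 - q^(k+1))) := by
  have h1q : (0:ℝ) < 1 - ‖q‖ := by linarith
  apply Summable.of_norm_bounded (g := fun k : ℕ => ‖q‖^k * (‖q‖/(1-‖q‖)))
  · exact (summable_geometric_of_lt_one (norm_nonneg q) hq1).mul_right _
  · intro k
    rw [norm_div, norm_pow]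
    have hd : 1 - ‖q‖ ≤ ‖1 - q^(k+1)‖ := by
      calc 1 - ‖q‖ ≤ 1 - ‖q^(k+1)‖ := by
            have : ‖q^(k+1)‖ ≤ ‖q‖ := by
              rw [norm_pow]; apply pow_le_of_le_one (norm_nonneg _) hq1.le; omega
            linarith
        _ ≤ ‖1 - q^(k+1)‖ := by simpa using norm_sub_norm_le (1:ℂ) (q^(k+1))
    calc ‖q‖^(k+1) / ‖1 - q^(k+1)‖ ≤ ‖q‖^(k+1) / (1-‖q‖) :=
        div_le_div₀ (by positivity) le_rfl h1q hd
      _ = ‖q‖^k * (‖q‖/(1-‖q‖)) := by rw [pow_succ]; ring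

lemma tendsto_L (hq1 : ‖q‖ < 1) :
    Tendsto (fun n => L q n) atTop (𝓝 (∑' k, q^(k+1) / (1 - q^(k+1)))) :=
  (summable_rhs hq1).hasSum.tendsto_sum_nat

lemma gl_tsum (hq : q ≠ 0) (hq1 : ‖q‖ < 1) (r : ℕ) :
    ∑' k, gl q r k = r + ∑' k, q^(k+1) / (1 - q^(k+1)) := by
  apply tendsto_nhds_unique (tendsto_S hq1 r)
  have h1 : Tendsto (fun n => (r : ℂ) + L q n) atTop
      (𝓝 ((r : ℂ) + ∑' k, q^(k+1) / (1 - q^(k+1)))) :=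
    tendsto_const_nhds.add (tendsto_L hq1)
  apply Tendsto.congr' _ h1
  filter_upwards [eventually_ge_atTop r] with n hn
  exact (main_fin hq hq1 r n hn).symm

end GKU

lemma qPoch_eq_P (q : ℂ) (n : ℕ) : qPoch q q n = GKU.P q n := by
  apply Finset.prod_congr rfl
  intro j _
  rw [← pow_succ']

/-- Generalized Kluyver–Uchimura identity. -/
theorem stmt8 (r : ℕ) (q : ℂ) (hq : q ≠ 0) (hq1 : ‖q‖ < 1) :
    ∑' k : ℕ, (-1 : ℂ) ^ k *
        q ^ ((((k + 1) * (k + 2) / 2 : ℕ) : ℤ) - (r : ℤ) * (k + 1)) /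
        (qPoch q q (k + 1) * (1 - q ^ (k + 1)))
      = (r : ℂ) + ∑' k : ℕ, q ^ (k + 1) / (1 - q ^ (k + 1)) := by
  rw [← GKU.gl_tsum hq hq1 r]
  apply tsum_congr
  intro k
  rw [qPoch_eq_P, GKU.gl]
  have hz : q ^ ((((k + 1) * (k + 2) / 2 : ℕ) : ℤ) - (r : ℤ) * ((k : ℤ) + 1))
      = q ^ ((k+1)*(k+2)/2) * ((q^r)^(k+1))⁻¹ := by
    rw [zpow_sub₀ hq, zpow_natCast,
      show (r:ℤ) * ((k:ℤ)+1) = ((r*(k+1) : ℕ) : ℤ) from by push_cast; ring,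
      zpow_natCast, pow_mul, div_eq_mul_inv]
  rw [hz, inv_pow, div_mul_eq_div_div]
  ring
end
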